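/- arXiv:1602.08975 — 5 statements merged into one kernel-verified Lean document; each statement's English description precedes it below -/
import Mathlib

section
/- Let L >= 2 be a natural number and define f_L(t) = cos(π(t − 1/(2L))) / cos(π/(2L)). Then f_L is band-limited to [−π, π], |f_L(l/L)| <= 1 for every l ∈ ℤ, and f_L(1/(2L)) = 1/cos(π/(2L)). In particular the bound sup|f| <= (1/cos(π/(2L))) sup_l |f(l/L)| over functions band-limited to [−π,π] is attained (with equality) for integer oversampling factors L. -/
open MeasureTheory Real Set
open scoped ENNReal NNReal

/-- Fourier transform with angular-frequency convention `ĝ(ω) = ∫ g(t) e^{-iωt} dt`. -/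
noncomputable def FT (g : ℝ → ℂ) (ω : ℝ) : ℂ :=
  ∫ t : ℝ, g t * Complex.exp (-(Complex.I * ω * t))

/-- `f` is band-limited to `[-B, B]`: continuous, bounded, and its distributional
Fourier transform is supported in `[-B, B]`. -/
def BandLimited (B : ℝ) (f : ℝ → ℂ) : Prop :=
  Continuous f ∧ (∃ C : ℝ, ∀ t : ℝ, ‖f t‖ ≤ C) ∧
  ∀ φ : SchwartzMap ℝ ℂ,
    (∃ U : Set ℝ, IsOpen U ∧ Set.Icc (-B) B ⊆ U ∧ ∀ ω ∈ U, FT (fun t => φ t) ω = 0) →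
    (∫ t : ℝ, f t * φ t) = 0

/-- The kernel class `M(L_ε, B)`. -/
def MemKernelClass (Leps B : ℝ) (g : ℝ → ℂ) : Prop :=
  Continuous g ∧ Integrable g ∧
  (∀ ω : ℝ, (FT g ω).im = 0) ∧
  (∀ ω : ℝ, FT g (-ω) = FT g ω) ∧
  (∀ ω : ℝ, |ω| ≤ B → FT g ω = 1) ∧
  (∀ ω : ℝ, B ≤ |ω| → |ω| ≤ Leps * B → 0 ≤ (FT g ω).re ∧ (FT g ω).re ≤ 1) ∧
  (∀ ω₁ ω₂ : ℝ, B ≤ ω₁ → ω₁ ≤ ω₂ → ω₂ ≤ Leps * B → (FT g ω₂).re ≤ (FT g ω₁).re) ∧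
  (∀ ω : ℝ, Leps * B < |ω| → FT g ω = 0)

/-- `C₂(L, L_ε)` with `B = π`, valued in `[0, ∞]`. -/
noncomputable def C2 (L Leps : ℝ) : ℝ≥0∞ :=
  ⨅ g ∈ {g : ℝ → ℂ | MemKernelClass Leps Real.pi g},
    ⨆ t : ℝ, ENNReal.ofReal (1 / L) * ∑' l : ℤ, (‖g (t - l / L)‖₊ : ℝ≥0∞)

/-- The trapezoidal kernel. -/
noncomputable def trapKernel (Leps B : ℝ) (t : ℝ) : ℝ :=
  if t = 0 then (Leps + 1) * B / (2 * Real.pi)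
  else 2 * Real.sin ((Leps + 1) * B * t / 2) * Real.sin ((Leps - 1) * B * t / 2) /
    (Real.pi * (Leps - 1) * B * t ^ 2)

/-- The triangle kernel. -/
noncomputable def triKernel (n : ℕ) (t : ℝ) : ℝ :=
  if t = 0 then 1 / (2 * n)
  else 2 * n * Real.sin (Real.pi * t / (2 * n)) ^ 2 / (Real.pi ^ 2 * t ^ 2)


/-- The extremal function `f_L`. -/
noncomputable def fL (L : ℕ) (t : ℝ) : ℂ :=
  ((Real.cos (Real.pi * (t - 1 / (2 * (L : ℝ)))) / Real.cos (Real.pi / (2 * (L : ℝ))) : ℝ) : ℂ)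

section Aux
variable {L : ℕ}

lemma hcpos (hL : 2 ≤ L) : 0 < Real.cos (Real.pi / (2 * (L : ℝ))) := by
  have hL2 : (2:ℝ) ≤ (L:ℝ) := by exact_mod_cast hL
  apply Real.cos_pos_of_mem_Ioo
  constructor
  · have : 0 < Real.pi / (2 * (L:ℝ)) := by positivity
    linarith [Real.pi_pos]
  · rw [div_lt_div_iff₀ (by linarith) (by norm_num)]
    nlinarith [Real.pi_pos]

lemma fL_norm (hL : 2 ≤ L) (t : ℝ) :
    ‖fL L t‖ = |Real.cos (Real.pi * (t - 1 / (2 * (L : ℝ))))| / Real.cos (Real.pi / (2 * (L : ℝ))) := by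
  rw [fL, Complex.norm_real, Real.norm_eq_abs, abs_div, abs_of_pos (hcpos hL)]

lemma fL_sample_le (hL : 2 ≤ L) (l : ℤ) : ‖fL L ((l : ℝ) / (L : ℝ))‖ ≤ 1 := by
  have hL2 : (2:ℝ) ≤ (L:ℝ) := by exact_mod_cast hL
  have hL0 : (0:ℝ) < (L:ℝ) := by linarith
  have hc := hcpos hL
  set k : ℤ := 2 * l - 1 with hk
  set m : ℤ := k % (2 * (L:ℤ)) with hm
  set q : ℤ := k / (2 * (L:ℤ)) with hq
  have hLpos : (0:ℤ) < 2 * (L:ℤ) := by positivity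
  have hkq : k = 2 * (L:ℤ) * q + m := (Int.mul_ediv_add_emod k (2 * (L:ℤ))).symm
  have hm0 : 0 ≤ m := Int.emod_nonneg k (by omega)
  have hmlt : m < 2 * (L:ℤ) := Int.emod_lt_of_pos k hLpos
  have hmodd : m % 2 = 1 := by
    have h2 : ((2:ℤ)) ∣ 2 * (L:ℤ) := ⟨(L:ℤ), rfl⟩
    have := Int.emod_emod_of_dvd k h2
    rw [hm]
    omega
  have hm1 : 1 ≤ m := by omega
  have hmle : m ≤ 2 * (L:ℤ) - 1 := by omega
  have hm1R : (1:ℝ) ≤ (m:ℝ) := by exact_mod_cast hm1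
  have hmleR : (m:ℝ) ≤ 2 * (L:ℝ) - 1 := by exact_mod_cast hmle
  have harg : Real.pi * ((l:ℝ)/(L:ℝ) - 1/(2*(L:ℝ))) = (k:ℝ) * Real.pi / (2*(L:ℝ)) := by
    have : (k:ℝ) = 2 * (l:ℝ) - 1 := by push_cast [hk]; ring
    rw [this]; field_simp
  have hθ : (k:ℝ) * Real.pi / (2*(L:ℝ)) = (q:ℤ) * Real.pi - (-((m:ℝ) * Real.pi / (2*(L:ℝ)))) := by
    have hkR : (k:ℝ) = 2 * (L:ℝ) * (q:ℝ) + (m:ℝ) := by exact_mod_cast hkq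
    rw [hkR]; field_simp; ring
  have habs : |Real.cos ((k:ℝ) * Real.pi / (2*(L:ℝ)))| = |Real.cos ((m:ℝ) * Real.pi / (2*(L:ℝ)))| := by
    rw [hθ, Real.cos_int_mul_pi_sub, Real.cos_neg, abs_mul]
    have : |((-1:ℝ)) ^ q| = 1 := by
      rcases Int.even_or_odd q with hq' | hq'
      · rw [hq'.neg_one_zpow]; simp
      · rw [hq'.neg_one_zpow]; simp
    rw [this, one_mul]
  have hxm0 : 0 ≤ (m:ℝ) * Real.pi / (2*(L:ℝ)) := by positivity
  have hxd0 : 0 ≤ Real.pi / (2*(L:ℝ)) := by positivity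
  have hle1 : Real.pi / (2*(L:ℝ)) ≤ (m:ℝ) * Real.pi / (2*(L:ℝ)) := by
    rw [div_le_div_iff₀ (by linarith) (by linarith)]
    nlinarith [mul_nonneg (mul_nonneg (by linarith : (0:ℝ) ≤ (m:ℝ) - 1) Real.pi_pos.le)
      (by linarith : (0:ℝ) ≤ 2*(L:ℝ))]
  have hle2 : (m:ℝ) * Real.pi / (2*(L:ℝ)) ≤ Real.pi - Real.pi / (2*(L:ℝ)) := by
    rw [le_sub_iff_add_le, ← add_div, div_le_iff₀ (by linarith)]
    nlinarith [Real.pi_pos]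
  have hupper : Real.cos ((m:ℝ) * Real.pi / (2*(L:ℝ))) ≤ Real.cos (Real.pi / (2*(L:ℝ))) :=
    Real.cos_le_cos_of_nonneg_of_le_pi hxd0 (by nlinarith [Real.pi_pos]) hle1
  have hlower : -Real.cos (Real.pi / (2*(L:ℝ))) ≤ Real.cos ((m:ℝ) * Real.pi / (2*(L:ℝ))) := by
    have := Real.cos_le_cos_of_nonneg_of_le_pi hxm0 (show Real.pi - Real.pi/(2*(L:ℝ)) ≤ Real.pi by linarith) hle2
    rwa [Real.cos_pi_sub] at this
  rw [fL_norm hL, harg, habs, div_le_one hc]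
  exact abs_le.mpr ⟨hlower, hupper⟩

end Aux

lemma fL_bound (hL : 2 ≤ L) (t : ℝ) :
    ‖fL L t‖ ≤ 1 / Real.cos (Real.pi / (2 * (L : ℝ))) := by
  rw [fL_norm hL]
  exact (div_le_div_iff_of_pos_right (hcpos hL)).mpr (Real.abs_cos_le_one _)

lemma fL_cont : Continuous (fL L) := by
  unfold fL; fun_prop

lemma fL_zero_norm (hL : 2 ≤ L) : ‖fL L (((0:ℤ) : ℝ) / (L : ℝ))‖ = 1 := by
  have hc := hcpos hL
  rw [fL_norm hL]
  have harg : Real.pi * (((0:ℤ):ℝ)/(L:ℝ) - 1/(2*(L:ℝ))) = -(Real.pi/(2*(L:ℝ))) := by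
    push_cast; ring
  rw [harg, Real.cos_neg, abs_of_pos hc, div_self hc.ne']

lemma fL_peak_norm (hL : 2 ≤ L) :
    ‖fL L (1 / (2 * (L : ℝ)))‖ = 1 / Real.cos (Real.pi / (2 * (L : ℝ))) := by
  have hc := hcpos hL
  rw [fL_norm hL, sub_self, mul_zero, Real.cos_zero, abs_one]

lemma fL_integral (hL : 2 ≤ L) (φ : SchwartzMap ℝ ℂ)
    (hπ : FT (fun t => φ t) Real.pi = 0) (hmπ : FT (fun t => φ t) (-Real.pi) = 0) :
    (∫ t : ℝ, fL L t * φ t) = 0 := by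
  have hc := hcpos hL
  set a : ℝ := 1 / (2 * (L:ℝ)) with ha
  set c : ℝ := Real.cos (Real.pi / (2 * (L:ℝ))) with hcdef
  have hi : ∀ ω : ℝ, Integrable
      (fun t : ℝ => φ t * Complex.exp (-(Complex.I * (ω:ℂ) * (t:ℂ)))) volume := by
    intro ω
    have h1 : Integrable (fun t : ℝ => Complex.exp (-(Complex.I * (ω:ℂ) * (t:ℂ))) * φ t)
        volume := by
      apply φ.integrable.bdd_mul (c := 1)
      · exact (Complex.continuous_exp.comp (by fun_prop)).aestronglyMeasurable
      · refine Filter.Eventually.of_forall (fun t => ?_)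
        rw [show -(Complex.I * (ω:ℂ) * (t:ℂ)) = ((-(ω*t) : ℝ) : ℂ) * Complex.I by
          push_cast; ring]
        rw [Complex.norm_exp_ofReal_mul_I]
    simpa [mul_comm] using h1
  have hpt : ∀ t : ℝ, fL L t * φ t =
      Complex.exp (-(Complex.I * (Real.pi:ℂ) * (a:ℂ))) / (2*(c:ℂ)) *
        (φ t * Complex.exp (-(Complex.I * ((-Real.pi : ℝ):ℂ) * (t:ℂ)))) +
      Complex.exp (Complex.I * (Real.pi:ℂ) * (a:ℂ)) / (2*(c:ℂ)) *
        (φ t * Complex.exp (-(Complex.I * ((Real.pi : ℝ):ℂ) * (t:ℂ)))) := by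
    intro t
    have hc0 : (c:ℂ) ≠ 0 := by exact_mod_cast hc.ne'
    have h1 : Complex.exp (-(Complex.I * (Real.pi:ℂ) * (a:ℂ))) *
        Complex.exp (-(Complex.I * ((-Real.pi:ℝ):ℂ) * (t:ℂ)))
        = Complex.exp (((Real.pi*(t-a) : ℝ):ℂ) * Complex.I) := by
      rw [← Complex.exp_add]; congr 1; push_cast; ring
    have h2 : Complex.exp (Complex.I * (Real.pi:ℂ) * (a:ℂ)) *
        Complex.exp (-(Complex.I * ((Real.pi:ℝ):ℂ) * (t:ℂ)))
        = Complex.exp (-((Real.pi*(t-a) : ℝ):ℂ) * Complex.I) := by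
      rw [← Complex.exp_add]; congr 1; push_cast; ring
    have hcz : ((Real.cos (Real.pi*(t-a)) : ℝ) : ℂ)
        = (Complex.exp (((Real.pi*(t-a):ℝ):ℂ)*Complex.I)
          + Complex.exp (-((Real.pi*(t-a):ℝ):ℂ)*Complex.I))/2 := by
      rw [Complex.ofReal_cos]; rfl
    have hfl : fL L t = ((Real.cos (Real.pi*(t-a)) : ℝ) : ℂ) / (c:ℂ) := by
      rw [fL, ← ha, ← hcdef]; push_cast; ring
    rw [hfl, hcz]
    linear_combination (-(φ t / (2*(c:ℂ)))) * h1 - (φ t / (2*(c:ℂ))) * h2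
  calc (∫ t : ℝ, fL L t * φ t)
      = ∫ t : ℝ, (Complex.exp (-(Complex.I * (Real.pi:ℂ) * (a:ℂ))) / (2*(c:ℂ)) *
          (φ t * Complex.exp (-(Complex.I * ((-Real.pi : ℝ):ℂ) * (t:ℂ)))) +
        Complex.exp (Complex.I * (Real.pi:ℂ) * (a:ℂ)) / (2*(c:ℂ)) *
          (φ t * Complex.exp (-(Complex.I * ((Real.pi : ℝ):ℂ) * (t:ℂ))))) := by
        exact integral_congr_ae (Filter.Eventually.of_forall hpt)
    _ = Complex.exp (-(Complex.I * (Real.pi:ℂ) * (a:ℂ))) / (2*(c:ℂ)) *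
          (∫ t : ℝ, φ t * Complex.exp (-(Complex.I * ((-Real.pi : ℝ):ℂ) * (t:ℂ)))) +
        Complex.exp (Complex.I * (Real.pi:ℂ) * (a:ℂ)) / (2*(c:ℂ)) *
          (∫ t : ℝ, φ t * Complex.exp (-(Complex.I * ((Real.pi : ℝ):ℂ) * (t:ℂ)))) := by
        rw [integral_add ((hi (-Real.pi)).const_mul _) ((hi Real.pi).const_mul _),
          integral_const_mul, integral_const_mul]
    _ = 0 := by
        have e1 : (∫ t : ℝ, φ t * Complex.exp (-(Complex.I * ((-Real.pi:ℝ):ℂ) * (t:ℂ))))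
            = FT (fun t => φ t) (-Real.pi) := rfl
        have e2 : (∫ t : ℝ, φ t * Complex.exp (-(Complex.I * ((Real.pi:ℝ):ℂ) * (t:ℂ))))
            = FT (fun t => φ t) Real.pi := rfl
        rw [e1, e2, hπ, hmπ]; ring


/-- for integer oversampling the bound `1/cos(π/(2L))` is attained. -/
theorem stmt2 (L : ℕ) (hL : 2 ≤ L) :
    BandLimited Real.pi (fL L) ∧
    (∀ l : ℤ, ‖fL L ((l : ℝ) / (L : ℝ))‖ ≤ 1) ∧
    fL L (1 / (2 * (L : ℝ))) = ((1 / Real.cos (Real.pi / (2 * (L : ℝ))) : ℝ) : ℂ) ∧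
    (⨆ t : ℝ, ‖fL L t‖) =
      (1 / Real.cos (Real.pi / (2 * (L : ℝ)))) * ⨆ l : ℤ, ‖fL L ((l : ℝ) / (L : ℝ))‖ := by
  have hc := hcpos hL
  refine ⟨⟨fL_cont, ⟨1 / Real.cos (Real.pi / (2 * (L:ℝ))), fL_bound hL⟩, ?_⟩,
    fL_sample_le hL, ?_, ?_⟩
  · rintro φ ⟨U, hUo, hUs, hU0⟩
    have hπ : FT (fun t => φ t) Real.pi = 0 :=
      hU0 _ (hUs ⟨by linarith [Real.pi_pos], le_refl _⟩)
    have hmπ : FT (fun t => φ t) (-Real.pi) = 0 :=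
      hU0 _ (hUs ⟨le_refl _, by linarith [Real.pi_pos]⟩)
    exact fL_integral hL φ hπ hmπ
  · rw [fL, sub_self, mul_zero, Real.cos_zero]
  · have hbdd : BddAbove (Set.range fun t : ℝ => ‖fL L t‖) := by
      refine ⟨1 / Real.cos (Real.pi / (2 * (L:ℝ))), ?_⟩
      rintro x ⟨t, rfl⟩; exact fL_bound hL t
    have hbdd2 : BddAbove (Set.range fun l : ℤ => ‖fL L ((l:ℝ)/(L:ℝ))‖) := by
      refine ⟨1, ?_⟩
      rintro x ⟨l, rfl⟩; exact fL_sample_le hL l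
    have h1 : (⨆ t : ℝ, ‖fL L t‖) = 1 / Real.cos (Real.pi / (2 * (L:ℝ))) := by
      apply le_antisymm (ciSup_le (fL_bound hL))
      calc 1 / Real.cos (Real.pi / (2 * (L:ℝ))) = ‖fL L (1/(2*(L:ℝ)))‖ := (fL_peak_norm hL).symm
        _ ≤ _ := le_ciSup hbdd _
    have h2 : (⨆ l : ℤ, ‖fL L ((l:ℝ)/(L:ℝ))‖) = 1 := by
      apply le_antisymm (ciSup_le (fL_sample_le hL))
      calc (1:ℝ) = ‖fL L (((0:ℤ):ℝ)/(L:ℝ))‖ := (fL_zero_norm hL).symm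
        _ ≤ _ := le_ciSup hbdd2 (0:ℤ)
    rw [h1, h2, mul_one]
end

section
/- Let B > 0 and L_eps > 1, and let S be the trapezoidal kernel with parameters L_eps and B. Then S is integrable and its Fourier transform 𝓕S(ω) = ∫_ℝ S(t) e^{−iωt} dt equals 1 for |ω| <= B, equals (L_eps·B − |ω|)/((L_eps − 1)B) for B <= |ω| <= L_eps·B, and equals 0 for |ω| >= L_eps·B. In particular S belongs to the kernel class M(L_eps, B). -/
open MeasureTheory Real Set
open scoped ENNReal NNReal

open scoped FourierTransform

noncomputable def trapFT (Leps B ω : ℝ) : ℝ :=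
  max 0 (min 1 ((Leps * B - |ω|) / ((Leps - 1) * B)))

variable {B Leps : ℝ}

lemma trapFT_even (ω : ℝ) : trapFT Leps B (-ω) = trapFT Leps B ω := by simp [trapFT]

lemma trapFT_nonneg (ω : ℝ) : 0 ≤ trapFT Leps B ω := le_max_left _ _

lemma trapFT_le_one (ω : ℝ) : trapFT Leps B ω ≤ 1 :=
  max_le zero_le_one (min_le_left _ _)

lemma trapFT_of_abs_le (hB : 0 < B) (hL : 1 < Leps) {ω : ℝ} (h : |ω| ≤ B) :
    trapFT Leps B ω = 1 := by
  have hc : 0 < (Leps - 1) * B := by nlinarith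
  have h1 : (1:ℝ) ≤ (Leps * B - |ω|) / ((Leps - 1) * B) := by
    rw [le_div_iff₀ hc]; nlinarith
  rw [trapFT, min_eq_left h1, max_eq_right zero_le_one]

lemma trapFT_of_mid (hB : 0 < B) (hL : 1 < Leps) {ω : ℝ} (h1 : B ≤ |ω|) (h2 : |ω| ≤ Leps * B) :
    trapFT Leps B ω = (Leps * B - |ω|) / ((Leps - 1) * B) := by
  have hc : 0 < (Leps - 1) * B := by nlinarith
  have h0 : 0 ≤ (Leps * B - |ω|) / ((Leps - 1) * B) := div_nonneg (by linarith) hc.le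
  have hle : (Leps * B - |ω|) / ((Leps - 1) * B) ≤ 1 := by
    rw [div_le_one hc]; linarith
  rw [trapFT, min_eq_right hle, max_eq_right h0]

lemma trapFT_of_ge (hB : 0 < B) (hL : 1 < Leps) {ω : ℝ} (h : Leps * B ≤ |ω|) :
    trapFT Leps B ω = 0 := by
  have hc : 0 < (Leps - 1) * B := by nlinarith
  have h0 : (Leps * B - |ω|) / ((Leps - 1) * B) ≤ 0 :=
    div_nonpos_of_nonpos_of_nonneg (by linarith) hc.le
  rw [trapFT, max_eq_left (le_trans (min_le_right _ _) h0)]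

lemma trapFT_continuous : Continuous (trapFT Leps B) := by
  unfold trapFT; fun_prop


lemma le_abs_of_not_mem_Icc {a x : ℝ} (hx : x ∉ Icc (-a) a) : a ≤ |x| := by
  by_contra h
  push_neg at h
  exact hx ⟨by linarith [neg_abs_le x], by linarith [le_abs_self x]⟩

lemma trapFT_hcs (hB : 0 < B) (hL : 1 < Leps) : HasCompactSupport (trapFT Leps B) := by
  apply HasCompactSupport.intro (isCompact_Icc (a := -(Leps*B)) (b := Leps*B))
  intro x hx
  exact trapFT_of_ge hB hL (le_abs_of_not_mem_Icc hx)

lemma trapFT_integrable (hB : 0 < B) (hL : 1 < Leps) : Integrable (trapFT Leps B) :=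
  trapFT_continuous.integrable_of_hasCompactSupport (trapFT_hcs hB hL)

lemma key_cos (hB : 0 < B) (hL : 1 < Leps) (t : ℝ) :
    ∫ ω : ℝ, trapFT Leps B ω * Real.cos (ω * t) = 2 * π * trapKernel Leps B t := by
  have hπ : (0:ℝ) < π := Real.pi_pos
  have hc : 0 < (Leps - 1) * B := by nlinarith
  have hLB : -(Leps*B) ≤ Leps*B := by nlinarith
  have hcont : Continuous (fun ω => trapFT Leps B ω * Real.cos (ω * t)) := by
    exact trapFT_continuous.mul (by fun_prop)
  have hsupp : ∀ ω ∉ Icc (-(Leps*B)) (Leps*B), trapFT Leps B ω * Real.cos (ω * t) = 0 := by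
    intro ω hω
    rw [trapFT_of_ge hB hL (le_abs_of_not_mem_Icc hω), zero_mul]
  have hii : ∀ a b : ℝ, IntervalIntegrable (fun ω => trapFT Leps B ω * Real.cos (ω * t)) volume a b :=
    fun a b => hcont.intervalIntegrable a b
  rw [← setIntegral_eq_integral_of_forall_compl_eq_zero hsupp,
    integral_Icc_eq_integral_Ioc, ← intervalIntegral.integral_of_le hLB,
    ← intervalIntegral.integral_add_adjacent_intervals (b := -B) (hii _ _) (hii _ _),
    ← intervalIntegral.integral_add_adjacent_intervals (a := -B) (b := B) (hii _ _) (hii _ _)]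
  -- rewrite the three pieces
  have hB' : -B ≤ B := by linarith
  have e1 : ∫ ω in (-(Leps*B))..(-B), trapFT Leps B ω * Real.cos (ω * t)
      = ∫ ω in (-(Leps*B))..(-B), (Leps*B + ω)/((Leps-1)*B) * Real.cos (ω * t) := by
    refine intervalIntegral.integral_congr fun ω hω => ?_
    rw [Set.uIcc_of_le (by linarith)] at hω
    obtain ⟨hω2, hω1⟩ := hω
    have hωneg : ω < 0 := by nlinarith
    rw [trapFT_of_mid hB hL (by rw [abs_of_neg hωneg]; linarith)
      (by rw [abs_of_neg hωneg]; linarith), abs_of_neg hωneg]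
    ring_nf
  have e2 : ∫ ω in (-B)..B, trapFT Leps B ω * Real.cos (ω * t)
      = ∫ ω in (-B)..B, Real.cos (ω * t) := by
    refine intervalIntegral.integral_congr fun ω hω => ?_
    rw [Set.uIcc_of_le hB'] at hω
    rw [trapFT_of_abs_le hB hL (abs_le.2 ⟨hω.1, hω.2⟩), one_mul]
  have e3 : ∫ ω in B..(Leps*B), trapFT Leps B ω * Real.cos (ω * t)
      = ∫ ω in B..(Leps*B), (Leps*B - ω)/((Leps-1)*B) * Real.cos (ω * t) := by
    refine intervalIntegral.integral_congr fun ω hω => ?_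
    rw [Set.uIcc_of_le (by nlinarith)] at hω
    obtain ⟨hω1, hω2⟩ := hω
    have hωpos : 0 < ω := lt_of_lt_of_le hB hω1
    rw [trapFT_of_mid hB hL (by rwa [abs_of_pos hωpos]) (by rwa [abs_of_pos hωpos]),
      abs_of_pos hωpos]
  rw [e1, e2, e3]
  rcases eq_or_ne t 0 with ht | ht
  · subst ht
    simp only [mul_zero, Real.cos_zero, mul_one]
    have hd1 : ∀ ω ∈ uIcc (-(Leps*B)) (-B), HasDerivAt
        (fun ω => (Leps*B*ω + ω^2/2)/((Leps-1)*B)) ((Leps*B + ω)/((Leps-1)*B)) ω := by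
      intro ω _
      have h1 : HasDerivAt (fun ω : ℝ => Leps*B*ω + ω^2/2) (Leps*B + ω) ω := by
        have := ((hasDerivAt_id ω).const_mul (Leps*B)).add ((hasDerivAt_pow 2 ω).div_const 2)
        exact this.congr_deriv (by norm_num)
      exact h1.div_const _
    have hd3 : ∀ ω ∈ uIcc B (Leps*B), HasDerivAt
        (fun ω => (Leps*B*ω - ω^2/2)/((Leps-1)*B)) ((Leps*B - ω)/((Leps-1)*B)) ω := by
      intro ω _
      have h1 : HasDerivAt (fun ω : ℝ => Leps*B*ω - ω^2/2) (Leps*B - ω) ω := by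
        have := ((hasDerivAt_id ω).const_mul (Leps*B)).sub ((hasDerivAt_pow 2 ω).div_const 2)
        exact this.congr_deriv (by norm_num)
      exact h1.div_const _
    rw [intervalIntegral.integral_eq_sub_of_hasDerivAt hd1
        ((Continuous.intervalIntegrable (by fun_prop) _ _)),
      intervalIntegral.integral_eq_sub_of_hasDerivAt hd3
        ((Continuous.intervalIntegrable (by fun_prop) _ _)),
      intervalIntegral.integral_const]
    rw [trapKernel, if_pos rfl]
    have hL1 : Leps - 1 ≠ 0 := by intro h; rw [h] at hc; simp at hc
    field_simp
    ring
  · have h1 : ∀ ω : ℝ, HasDerivAt (fun ω : ℝ => ω*t) t ω := fun ω => hasDerivAt_mul_const t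
    have hsin : ∀ ω : ℝ, HasDerivAt (fun ω => Real.sin (ω*t)) (Real.cos (ω*t) * t) ω :=
      fun ω => (h1 ω).sin
    have hcos : ∀ ω : ℝ, HasDerivAt (fun ω => Real.cos (ω*t)) (-Real.sin (ω*t) * t) ω :=
      fun ω => (h1 ω).cos
    have hd1 : ∀ ω ∈ uIcc (-(Leps*B)) (-B), HasDerivAt
        (fun ω => ((Leps*B + ω) * Real.sin (ω*t)/t + Real.cos (ω*t)/t^2)/((Leps-1)*B))
        ((Leps*B + ω)/((Leps-1)*B) * Real.cos (ω*t)) ω := by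
      intro ω _
      have h2 : HasDerivAt (fun ω : ℝ => Leps*B + ω) 1 ω := (hasDerivAt_id ω).const_add (Leps*B)
      have := ((((h2.mul (hsin ω)).div_const t).add ((hcos ω).div_const (t^2))).div_const
        ((Leps-1)*B))
      refine this.congr_deriv ?_
      field_simp
      ring
    have hd2 : ∀ ω ∈ uIcc (-B) B, HasDerivAt
        (fun ω => Real.sin (ω*t)/t) (Real.cos (ω*t)) ω := by
      intro ω _
      have := (hsin ω).div_const t
      refine this.congr_deriv ?_
      field_simp
    have hd3 : ∀ ω ∈ uIcc B (Leps*B), HasDerivAt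
        (fun ω => ((Leps*B - ω) * Real.sin (ω*t)/t - Real.cos (ω*t)/t^2)/((Leps-1)*B))
        ((Leps*B - ω)/((Leps-1)*B) * Real.cos (ω*t)) ω := by
      intro ω _
      have h2 : HasDerivAt (fun ω : ℝ => Leps*B - ω) (-1) ω := (hasDerivAt_id ω).const_sub (Leps*B)
      have := ((((h2.mul (hsin ω)).div_const t).sub ((hcos ω).div_const (t^2))).div_const
        ((Leps-1)*B))
      refine this.congr_deriv ?_
      field_simp
      ring
    rw [intervalIntegral.integral_eq_sub_of_hasDerivAt hd1
        ((Continuous.intervalIntegrable (by fun_prop) _ _)),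
      intervalIntegral.integral_eq_sub_of_hasDerivAt hd2
        ((Continuous.intervalIntegrable (by fun_prop) _ _)),
      intervalIntegral.integral_eq_sub_of_hasDerivAt hd3
        ((Continuous.intervalIntegrable (by fun_prop) _ _))]
    rw [trapKernel, if_neg ht]
    have trig : 2 * Real.sin ((Leps + 1) * B * t / 2) * Real.sin ((Leps - 1) * B * t / 2)
        = Real.cos (B*t) - Real.cos (Leps*B*t) := by
      rw [Real.cos_sub_cos]
      have ha : (B*t + Leps*B*t)/2 = (Leps+1)*B*t/2 := by ring
      have hb : (B*t - Leps*B*t)/2 = -((Leps-1)*B*t/2) := by ring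
      rw [ha, hb, Real.sin_neg]
      ring
    rw [trig]
    simp only [neg_mul, Real.sin_neg, Real.cos_neg]
    have hL1 : Leps - 1 ≠ 0 := by intro h; rw [h] at hc; simp at hc
    have hBne : B ≠ 0 := hB.ne'
    have hπne : π ≠ 0 := hπ.ne'
    field_simp
    ring

lemma key_sin (t : ℝ) : ∫ ω : ℝ, trapFT Leps B ω * Real.sin (ω * t) = 0 := by
  have h := integral_neg_eq_self (fun ω => trapFT Leps B ω * Real.sin (ω * t)) volume
  have h2 : ∀ ω : ℝ, trapFT Leps B (-ω) * Real.sin (-ω * t)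
      = -(trapFT Leps B ω * Real.sin (ω * t)) := fun ω => by
    rw [trapFT_even, neg_mul, Real.sin_neg]; ring
  have h3 : ∫ ω : ℝ, trapFT Leps B ω * Real.sin (ω * t)
      = - ∫ ω : ℝ, trapFT Leps B ω * Real.sin (ω * t) := by
    conv_lhs => rw [← h]
    simp_rw [h2]
    rw [integral_neg]
  linarith

lemma key_exp (hB : 0 < B) (hL : 1 < Leps) (t : ℝ) :
    ∫ ω : ℝ, (trapFT Leps B ω : ℂ) * Complex.exp ((ω * t : ℝ) * Complex.I)
      = ((2 * π * trapKernel Leps B t : ℝ) : ℂ) := by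
  have hci : Integrable (fun ω => trapFT Leps B ω * Real.cos (ω * t)) :=
    (trapFT_continuous.mul (by fun_prop)).integrable_of_hasCompactSupport
      ((trapFT_hcs hB hL).mul_right)
  have hsi : Integrable (fun ω => trapFT Leps B ω * Real.sin (ω * t)) :=
    (trapFT_continuous.mul (by fun_prop)).integrable_of_hasCompactSupport
      ((trapFT_hcs hB hL).mul_right)
  have step : (fun ω : ℝ => (trapFT Leps B ω : ℂ) * Complex.exp ((ω * t : ℝ) * Complex.I))
      = fun ω : ℝ => ((trapFT Leps B ω * Real.cos (ω * t) : ℝ) : ℂ)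
        + ((trapFT Leps B ω * Real.sin (ω * t) : ℝ) : ℂ) * Complex.I := by
    funext ω
    rw [Complex.exp_mul_I]
    push_cast
    ring
  have hci' : Integrable (fun ω : ℝ => ((trapFT Leps B ω * Real.cos (ω * t) : ℝ) : ℂ)) :=
    hci.ofReal
  have hsi' : Integrable (fun ω : ℝ => ((trapFT Leps B ω * Real.sin (ω * t) : ℝ) : ℂ)) :=
    hsi.ofReal
  rw [step, integral_add hci' (hsi'.mul_const Complex.I), integral_mul_const,
    integral_complex_ofReal, integral_complex_ofReal, key_cos hB hL, key_sin t]
  simp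

open Filter Topology in
lemma trapKernel_continuous (hB : 0 < B) (hL : 1 < Leps) :
    Continuous (trapKernel Leps B) := by
  have hπ := Real.pi_pos
  have hc : 0 < (Leps - 1) * B := by nlinarith
  have hL1 : Leps - 1 ≠ 0 := by intro h; rw [h] at hc; simp at hc
  have hBne : B ≠ 0 := hB.ne'
  have hπne : π ≠ 0 := hπ.ne'
  rw [continuous_iff_continuousAt]
  intro x
  rcases eq_or_ne x 0 with hx | hx
  · subst hx
    have hslope : ∀ a : ℝ, Tendsto (fun t => Real.sin (a * t) / t) (𝓝[≠] (0:ℝ)) (𝓝 a) := by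
      intro a
      have hd : HasDerivAt (fun t : ℝ => Real.sin (a * t)) a 0 := by
        have h1 : HasDerivAt (fun t : ℝ => a * t) a 0 := by
          simpa using (hasDerivAt_id (0:ℝ)).const_mul a
        have := h1.sin
        simpa using this
      refine (hasDerivAt_iff_tendsto_slope.1 hd).congr' ?_
      filter_upwards [self_mem_nhdsWithin] with t ht
      simp [slope_def_field]
    have hmul := ((hslope ((Leps+1)*B/2)).mul (hslope ((Leps-1)*B/2))).const_mul
      (2/(π*((Leps-1)*B)))
    have heq : (fun t => 2/(π*((Leps-1)*B)) *
          (Real.sin ((Leps+1)*B/2 * t)/t * (Real.sin ((Leps-1)*B/2 * t)/t)))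
        =ᶠ[𝓝[≠] (0:ℝ)] trapKernel Leps B := by
      filter_upwards [self_mem_nhdsWithin] with t ht
      have ht' : t ≠ 0 := ht
      rw [trapKernel, if_neg ht']
      have h1 : (Leps+1)*B/2*t = (Leps+1)*B*t/2 := by ring
      have h2 : (Leps-1)*B/2*t = (Leps-1)*B*t/2 := by ring
      rw [h1, h2]
      field_simp
    have hval : 2/(π*((Leps-1)*B)) * ((Leps+1)*B/2 * ((Leps-1)*B/2)) = (Leps+1)*B/(2*π) := by
      field_simp
    have h2 : Tendsto (trapKernel Leps B) (𝓝[≠] (0:ℝ)) (𝓝 ((Leps+1)*B/(2*π))) :=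
      hval ▸ hmul.congr' heq
    have h0 : trapKernel Leps B 0 = (Leps+1)*B/(2*π) := if_pos rfl
    rw [ContinuousAt, h0, ← nhdsNE_sup_pure (0:ℝ), tendsto_sup]
    exact ⟨h2, h0 ▸ tendsto_pure_nhds (trapKernel Leps B) 0⟩
  · have hne : π * (Leps - 1) * B * x ^ 2 ≠ 0 :=
      mul_ne_zero (mul_ne_zero (mul_ne_zero hπ.ne'
        (by intro h; rw [show Leps - 1 = 0 from h] at hc; simp at hc)) hB.ne')
        (pow_ne_zero 2 hx)
    have hcont : ContinuousAt (fun t => 2 * Real.sin ((Leps + 1) * B * t / 2) *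
        Real.sin ((Leps - 1) * B * t / 2) / (π * (Leps - 1) * B * t ^ 2)) x :=
      ContinuousAt.div (by fun_prop) (by fun_prop) hne
    refine (continuousAt_congr ?_).2 hcont
    filter_upwards [isOpen_compl_singleton.mem_nhds hx] with t ht
    have ht' : t ≠ 0 := ht
    simp [trapKernel, ht']

lemma trapKernel_even (t : ℝ) : trapKernel Leps B (-t) = trapKernel Leps B t := by
  rcases eq_or_ne t 0 with h | h
  · subst h; simp
  · rw [trapKernel, trapKernel, if_neg (neg_ne_zero.2 h), if_neg h,
      show (Leps+1)*B*(-t)/2 = -((Leps+1)*B*t/2) by ring,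
      show (Leps-1)*B*(-t)/2 = -((Leps-1)*B*t/2) by ring,
      Real.sin_neg, Real.sin_neg]
    ring_nf

lemma trapKernel_integrable (hB : 0 < B) (hL : 1 < Leps) :
    Integrable (trapKernel Leps B) := by
  have hπ := Real.pi_pos
  have hc : 0 < (Leps - 1) * B := by nlinarith
  have hcont := trapKernel_continuous hB hL
  have hbound : ∀ t : ℝ, t ≠ 0 → ‖trapKernel Leps B t‖ ≤ 2/(π*((Leps-1)*B)) * (t^2)⁻¹ := by
    intro t ht
    have hden : 0 < π * (Leps - 1) * B * t ^ 2 := by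
      have h := mul_pos (mul_pos hπ hc) (pow_pos (abs_pos.2 ht) 2)
      rw [sq_abs] at h
      have he : π * ((Leps-1) * B) * t^2 = π * (Leps - 1) * B * t ^ 2 := by ring
      rwa [he] at h
    rw [Real.norm_eq_abs, trapKernel, if_neg ht, abs_div, abs_of_pos hden]
    have h2 : |2 * Real.sin ((Leps + 1) * B * t / 2) * Real.sin ((Leps - 1) * B * t / 2)| ≤ 2 := by
      rw [abs_mul, abs_mul, abs_two]
      have s1 := abs_sin_le_one ((Leps + 1) * B * t / 2)
      have s2 := abs_sin_le_one ((Leps - 1) * B * t / 2)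
      have n1 := abs_nonneg (Real.sin ((Leps + 1) * B * t / 2))
      have n2 := abs_nonneg (Real.sin ((Leps - 1) * B * t / 2))
      nlinarith
    calc |2 * Real.sin ((Leps + 1) * B * t / 2) * Real.sin ((Leps - 1) * B * t / 2)| /
          (π * (Leps - 1) * B * t ^ 2)
        ≤ 2 / (π * (Leps - 1) * B * t ^ 2) := by
          exact div_le_div_of_nonneg_right h2 hden.le
      _ = 2/(π*((Leps-1)*B)) * (t^2)⁻¹ := by
          have hL1 : Leps - 1 ≠ 0 := by intro h; rw [h] at hc; simp at hc
          field_simp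
  have hmaj : IntegrableOn (fun t : ℝ => 2/(π*((Leps-1)*B)) * (t^2)⁻¹) (Ioi 1) := by
    apply Integrable.const_mul
    have h1 : IntegrableOn (fun t : ℝ => t ^ (-2 : ℝ)) (Ioi 1) :=
      (integrableOn_Ioi_rpow_iff one_pos).2 (by norm_num)
    refine h1.congr_fun (fun x hx => ?_) measurableSet_Ioi
    have hx0 : (0:ℝ) ≤ x := by have := (mem_Ioi.1 hx); linarith
    dsimp only
    rw [Real.rpow_neg hx0, show ((2:ℝ)) = ((2:ℕ):ℝ) from by norm_num, Real.rpow_natCast]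
  have hIoi : IntegrableOn (trapKernel Leps B) (Ioi 1) := by
    apply Integrable.mono' hmaj (hcont.aestronglyMeasurable.restrict)
    rw [ae_restrict_iff' measurableSet_Ioi]
    filter_upwards with t ht
    exact hbound t (by have := mem_Ioi.1 ht; intro h; rw [h] at this; linarith)
  have hIcc : IntegrableOn (trapKernel Leps B) (Icc (-1) 1) := hcont.integrableOn_Icc
  have hIio : IntegrableOn (trapKernel Leps B) (Iio (-1)) := by
    rw [← (Measure.measurePreserving_neg (volume : Measure ℝ)).integrableOn_comp_preimage
        (Homeomorph.neg ℝ).measurableEmbedding]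
    simp only [Function.comp_def, neg_preimage, neg_Iio, neg_neg]
    refine hIoi.congr_fun (fun x _ => ?_) measurableSet_Ioi
    exact (trapKernel_even x).symm
  rw [← integrableOn_univ, ← @Iio_union_Ici _ _ (-1 : ℝ), integrableOn_union,
    ← Set.Icc_union_Ioi_eq_Ici (show (-1:ℝ) ≤ 1 by norm_num), integrableOn_union]
  exact ⟨hIio, hIcc, hIoi⟩

lemma invT (hB : 0 < B) (hL : 1 < Leps) (u : ℝ) :
    𝓕⁻ (fun ω : ℝ => (trapFT Leps B ω : ℂ)) u
      = ((2 * π * trapKernel Leps B (2*π*u) : ℝ) : ℂ) := by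
  rw [Real.fourierInv_eq, ← key_exp hB hL (2*π*u)]
  refine integral_congr_ae (Filter.Eventually.of_forall fun ω => ?_)
  simp only [Circle.smul_def, Real.fourierChar_apply]
  have hinner : (inner ℝ ω u : ℝ) = ω * u := by simp [mul_comm]
  rw [hinner,
    show ((2*π*(ω*u) : ℝ) : ℂ) * Complex.I = ((ω*(2*π*u) : ℝ) : ℂ) * Complex.I
      from by push_cast; ring, smul_eq_mul]
  ring

lemma fwdT (hB : 0 < B) (hL : 1 < Leps) (u : ℝ) :
    𝓕 (fun ω : ℝ => (trapFT Leps B ω : ℂ)) u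
      = ((2 * π * trapKernel Leps B (2*π*u) : ℝ) : ℂ) := by
  have h := Real.fourierInv_eq_fourier_neg
    (fun ω : ℝ => (trapFT Leps B ω : ℂ)) (-u)
  rw [neg_neg] at h
  rw [← h, invT hB hL]
  rw [show 2*π*(-u) = -(2*π*u) by ring, trapKernel_even]

lemma fwdT_integrable (hB : 0 < B) (hL : 1 < Leps) :
    Integrable (𝓕 (fun ω : ℝ => (trapFT Leps B ω : ℂ))) := by
  have he : (𝓕 (fun ω : ℝ => (trapFT Leps B ω : ℂ)))
      = fun u => ((2*π*trapKernel Leps B (2*π*u) : ℝ) : ℂ) := funext (fwdT hB hL)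
  rw [he]
  have h1 : Integrable (fun u : ℝ => 2*π*trapKernel Leps B (2*π*u)) :=
    ((trapKernel_integrable hB hL).comp_mul_left' (by positivity : (2*π:ℝ) ≠ 0)).const_mul (2*π)
  exact h1.ofReal

set_option maxHeartbeats 1000000 in
lemma FT_trapKernel (hB : 0 < B) (hL : 1 < Leps) (ω : ℝ) :
    FT (fun t : ℝ => (trapKernel Leps B t : ℂ)) ω = ((trapFT Leps B ω : ℝ) : ℂ) := by
  have hT : Integrable (fun ω : ℝ => ((trapFT Leps B ω : ℝ) : ℂ)) :=
    (trapFT_integrable hB hL).ofReal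
  have hTc : Continuous (fun ω : ℝ => ((trapFT Leps B ω : ℝ) : ℂ)) :=
    Complex.continuous_ofReal.comp trapFT_continuous
  have hinv := hT.fourier_fourierInv_eq (fwdT_integrable hB hL) (hTc.continuousAt (x := ω))
  have h2π : (0:ℝ) < 2*π := by positivity
  rw [FT]
  calc ∫ t : ℝ, (trapKernel Leps B t : ℂ) * Complex.exp (-(Complex.I * ω * t))
      = (2*π) • ∫ x : ℝ, (fun t : ℝ => (trapKernel Leps B t : ℂ)
          * Complex.exp (-(Complex.I * ω * t))) (2*π*x) := by
        rw [Measure.integral_comp_mul_left (fun t : ℝ => (trapKernel Leps B t : ℂ)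
            * Complex.exp (-(Complex.I * ω * t))) (2*π),
          abs_of_pos (by positivity : (0:ℝ) < (2*π)⁻¹), smul_smul,
          mul_inv_cancel₀ (ne_of_gt h2π), one_smul]
    _ = ∫ x : ℝ, Real.fourierChar (-(inner ℝ x ω : ℝ)) • (𝓕⁻ (fun ω : ℝ => (trapFT Leps B ω : ℂ)) x) := by
        rw [← integral_smul]
        refine integral_congr_ae (Filter.Eventually.of_forall fun x => ?_)
        simp only []
        rw [invT hB hL]
        simp only [Circle.smul_def, Real.fourierChar_apply]
        have hinner : (inner ℝ x ω : ℝ) = x * ω := by simp [mul_comm]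
        rw [hinner,
          show -(Complex.I * (ω:ℂ) * ((2*π*x : ℝ) : ℂ)) = ((2*π*(-(x*ω)) : ℝ) : ℂ) * Complex.I
            from by push_cast; ring]
        rw [Complex.real_smul]
        push_cast
        rw [smul_eq_mul]
        ring
    _ = 𝓕 (𝓕⁻ (fun ω : ℝ => (trapFT Leps B ω : ℂ))) ω := by
        rw [Real.fourier_eq]
    _ = ((trapFT Leps B ω : ℝ) : ℂ) := hinv


/-- the Fourier transform of the trapezoidal kernel is the trapezoid,
and the trapezoidal kernel belongs to the kernel class `M(L_ε, B)`. -/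
theorem stmt4 (B Leps : ℝ) (hB : 0 < B) (hLeps : 1 < Leps) :
    Integrable (fun t : ℝ => (trapKernel Leps B t : ℂ)) ∧
    (∀ ω : ℝ, |ω| ≤ B → FT (fun t : ℝ => (trapKernel Leps B t : ℂ)) ω = 1) ∧
    (∀ ω : ℝ, B ≤ |ω| → |ω| ≤ Leps * B →
      FT (fun t : ℝ => (trapKernel Leps B t : ℂ)) ω =
        (((Leps * B - |ω|) / ((Leps - 1) * B) : ℝ) : ℂ)) ∧
    (∀ ω : ℝ, Leps * B ≤ |ω| → FT (fun t : ℝ => (trapKernel Leps B t : ℂ)) ω = 0) ∧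
    MemKernelClass Leps B (fun t : ℝ => (trapKernel Leps B t : ℂ)) := by
  have hFT : ∀ ω : ℝ, FT (fun t : ℝ => (trapKernel Leps B t : ℂ)) ω
      = ((trapFT Leps B ω : ℝ) : ℂ) := FT_trapKernel hB hLeps
  have hc : 0 < (Leps - 1) * B := by nlinarith
  refine ⟨(trapKernel_integrable hB hLeps).ofReal, ?_, ?_, ?_, ?_⟩
  · intro ω hω
    rw [hFT, trapFT_of_abs_le hB hLeps hω]
    norm_num
  · intro ω h1 h2
    rw [hFT, trapFT_of_mid hB hLeps h1 h2]
  · intro ω h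
    rw [hFT, trapFT_of_ge hB hLeps h]
    norm_num
  · refine ⟨Complex.continuous_ofReal.comp (trapKernel_continuous hB hLeps),
      (trapKernel_integrable hB hLeps).ofReal, ?_, ?_, ?_, ?_, ?_, ?_⟩
    · intro ω; rw [hFT]; simp
    · intro ω; rw [hFT, hFT, trapFT_even]
    · intro ω h; rw [hFT, trapFT_of_abs_le hB hLeps h]; norm_num
    · intro ω h1 h2
      rw [hFT]
      simp only [Complex.ofReal_re]
      exact ⟨trapFT_nonneg _, trapFT_le_one _⟩
    · intro ω₁ ω₂ h1 h2 h3
      rw [hFT, hFT]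
      simp only [Complex.ofReal_re]
      have ha1 : |ω₁| = ω₁ := abs_of_pos (lt_of_lt_of_le hB h1)
      have ha2 : |ω₂| = ω₂ := abs_of_pos (lt_of_lt_of_le hB (le_trans h1 h2))
      rw [trapFT_of_mid hB hLeps (by rw [ha2]; linarith) (by rw [ha2]; exact h3),
        trapFT_of_mid hB hLeps (by rw [ha1]; exact h1) (by rw [ha1]; linarith), ha1, ha2]
      exact div_le_div_of_nonneg_right (by linarith) hc.le
    · intro ω h
      rw [hFT, trapFT_of_ge hB hLeps h.le]
      norm_num
end

section
/- Let L_eps > 1, let S be the trapezoidal kernel with parameters L_eps and B = π, and let L >= (L_eps + 1)/2 be a real number. Then sup_{t∈ℝ} (1/L) Σ_{l∈ℤ} |S(t − l/L)| <= sqrt((L_eps + 1)/(L_eps − 1)). -/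
open MeasureTheory Real Set
open scoped ENNReal NNReal



open Complex Filter Asymptotics
open scoped FourierTransform

noncomputable def fejR (a t : ℝ) : ℝ :=
  if t = 0 then a ^ 2 else Real.sin (Real.pi * a * t) ^ 2 / (Real.pi ^ 2 * t ^ 2)

noncomputable def fejC (a t : ℝ) : ℂ := (fejR a t : ℂ)

noncomputable def triC (a ξ : ℝ) : ℂ := ((max (a - |ξ|) 0 : ℝ) : ℂ)

lemma fejR_nonneg (a t : ℝ) : 0 ≤ fejR a t := by
  unfold fejR; split <;> positivity

lemma fejR_zero (a : ℝ) : fejR a 0 = a ^ 2 := by simp [fejR]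

lemma fejR_le_sq (a t : ℝ) : fejR a t ≤ a ^ 2 := by
  unfold fejR; split
  · exact le_refl _
  · rename_i ht
    rw [div_le_iff₀ (by positivity)]
    calc Real.sin (Real.pi * a * t) ^ 2 ≤ (Real.pi * a * t) ^ 2 := Real.sin_sq_le_sq
    _ = a ^ 2 * (Real.pi ^ 2 * t ^ 2) := by ring

lemma fejR_le_inv (a : ℝ) {t : ℝ} (ht : t ≠ 0) : fejR a t ≤ 1 / (Real.pi ^ 2 * t ^ 2) := by
  unfold fejR; rw [if_neg ht]
  exact div_le_div_of_nonneg_right (Real.sin_sq_le_one _) (by positivity) |>.trans_eq rfl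

lemma continuous_triC (a : ℝ) : Continuous (triC a) := by
  unfold triC
  exact Complex.continuous_ofReal.comp ((continuous_const.sub (_root_.continuous_abs : Continuous (fun x : ℝ => |x|))).max continuous_const)

lemma integrable_triC (a : ℝ) : Integrable (triC a) := by
  apply Continuous.integrable_of_hasCompactSupport (continuous_triC a)
  apply HasCompactSupport.intro (isCompact_Icc (a := -a) (b := a))
  intro x hx
  simp only [triC, Set.mem_Icc, not_and_or, not_le] at hx ⊢
  have : a - |x| ≤ 0 := by rcases hx with h | h <;> cases abs_cases x <;> linarith
  simp [max_eq_right this]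

lemma fourierInv_triC (a : ℝ) (ha : 0 < a) : 𝓕⁻ (triC a) = fejC a := by
  funext v
  rw [Real.fourierInv_eq']
  simp only [RCLike.inner_apply, conj_trivial, smul_eq_mul]
  simp only [mul_comm v]
  set c : ℂ := ((2 * Real.pi * v : ℝ) : ℂ) * Complex.I with hc
  have hexp : ∀ ξ : ℝ, ((2 * Real.pi * (ξ * v) : ℝ) : ℂ) * Complex.I = c * ξ := by
    intro ξ; rw [hc]; push_cast; ring
  have hcont : Continuous fun ξ : ℝ => Complex.exp (c * ξ) * triC a ξ :=
    (Complex.continuous_exp.comp (continuous_const.mul Complex.continuous_ofReal)).mul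
      (continuous_triC a)
  have step1 : (∫ ξ : ℝ, Complex.exp (((2 * Real.pi * (ξ * v) : ℝ) : ℂ) * Complex.I) * triC a ξ)
      = (∫ ξ in (-a)..(0:ℝ), Complex.exp (c * ξ) * ((a : ℂ) + ξ)) +
        ∫ ξ in (0:ℝ)..a, Complex.exp (c * ξ) * ((a : ℂ) - ξ) := by
    calc (∫ ξ : ℝ, Complex.exp (((2 * Real.pi * (ξ * v) : ℝ) : ℂ) * Complex.I) * triC a ξ)
        = ∫ ξ : ℝ, Complex.exp (c * ξ) * triC a ξ := by simp_rw [hexp]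
      _ = ∫ ξ in Set.Ioc (-a) a, Complex.exp (c * ξ) * triC a ξ := by
          rw [setIntegral_eq_integral_of_forall_compl_eq_zero]
          intro ξ hξ
          have h0 : a - |ξ| ≤ 0 := by
            simp only [Set.mem_Ioc, not_and_or, not_lt, not_le] at hξ
            cases abs_cases ξ <;> rcases hξ with h | h <;> linarith
          simp [triC, max_eq_right h0]
      _ = ∫ ξ in (-a)..a, Complex.exp (c * ξ) * triC a ξ :=
          (intervalIntegral.integral_of_le (by linarith)).symm
      _ = (∫ ξ in (-a)..(0:ℝ), Complex.exp (c * ξ) * triC a ξ) +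
            ∫ ξ in (0:ℝ)..a, Complex.exp (c * ξ) * triC a ξ :=
          (intervalIntegral.integral_add_adjacent_intervals (hcont.intervalIntegrable _ _)
            (hcont.intervalIntegrable _ _)).symm
      _ = (∫ ξ in (-a)..(0:ℝ), Complex.exp (c * ξ) * ((a : ℂ) + ξ)) +
            ∫ ξ in (0:ℝ)..a, Complex.exp (c * ξ) * ((a : ℂ) - ξ) := by
          congr 1
          · apply intervalIntegral.integral_congr
            intro ξ hξ
            rw [Set.uIcc_of_le (by linarith : -a ≤ (0:ℝ))] at hξ
            have h1 : |ξ| = -ξ := abs_of_nonpos hξ.2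
            have h2 : (0:ℝ) ≤ a - |ξ| := by rw [h1]; linarith [hξ.1]
            simp only [triC, max_eq_left h2]
            push_cast [h1]; ring
          · apply intervalIntegral.integral_congr
            intro ξ hξ
            rw [Set.uIcc_of_le (by linarith : (0:ℝ) ≤ a)] at hξ
            have h1 : |ξ| = ξ := abs_of_nonneg hξ.1
            have h2 : (0:ℝ) ≤ a - |ξ| := by rw [h1]; linarith [hξ.2]
            simp only [triC, max_eq_left h2]
            push_cast [h1]; ring
  rw [step1]
  rcases eq_or_ne v 0 with hv | hv
  · -- v = 0 case
    have hc0 : c = 0 := by rw [hc, hv]; push_cast; ring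
    have key1 : ∀ z : ℂ, HasDerivAt (fun z : ℂ => (a : ℂ) * z + z ^ 2 / 2) ((a : ℂ) + z) z := by
      intro z
      have h1 := (hasDerivAt_id z).const_mul (a : ℂ)
      have h2 := ((hasDerivAt_pow 2 z).div_const 2)
      simpa [Pi.add_def] using h1.add h2
    have key2 : ∀ z : ℂ, HasDerivAt (fun z : ℂ => (a : ℂ) * z - z ^ 2 / 2) ((a : ℂ) - z) z := by
      intro z
      have h1 := (hasDerivAt_id z).const_mul (a : ℂ)
      have h2 := ((hasDerivAt_pow 2 z).div_const 2)
      simpa [Pi.sub_def] using h1.sub h2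
    have i1 : (∫ ξ in (-a)..(0:ℝ), Complex.exp (c * ξ) * ((a : ℂ) + ξ)) = (a:ℂ)^2/2 := by
      simp only [hc0, zero_mul, Complex.exp_zero, one_mul]
      rw [intervalIntegral.integral_eq_sub_of_hasDerivAt
        (fun x _ => (key1 x).comp_ofReal)
        ((continuous_const.add Complex.continuous_ofReal).intervalIntegrable _ _)]
      push_cast; ring
    have i2 : (∫ ξ in (0:ℝ)..a, Complex.exp (c * ξ) * ((a : ℂ) - ξ)) = (a:ℂ)^2/2 := by
      simp only [hc0, zero_mul, Complex.exp_zero, one_mul]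
      rw [intervalIntegral.integral_eq_sub_of_hasDerivAt
        (fun x _ => (key2 x).comp_ofReal)
        ((continuous_const.sub Complex.continuous_ofReal).intervalIntegrable _ _)]
      push_cast; ring
    rw [i1, i2, hv]
    unfold fejC
    rw [fejR_zero]
    push_cast; ring
  · -- v ≠ 0 case
    have hc0 : c ≠ 0 := by
      rw [hc]
      apply mul_ne_zero _ Complex.I_ne_zero
      exact_mod_cast Complex.ofReal_ne_zero.mpr (by positivity :  2 * Real.pi * v ≠ 0)
    have key1 : ∀ z : ℂ, HasDerivAt (fun z : ℂ => Complex.exp (c * z) * (((a:ℂ) + z) / c - 1 / c ^ 2))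
        (Complex.exp (c * z) * ((a : ℂ) + z)) z := by
      intro z
      have h1 : HasDerivAt (fun z : ℂ => Complex.exp (c * z)) (Complex.exp (c * z) * c) z := by
        simpa [mul_comm] using ((hasDerivAt_id z).const_mul c).cexp
      have h2 : HasDerivAt (fun z : ℂ => (((a:ℂ) + z) / c - 1 / c ^ 2)) (1 / c) z := by
        have h3 := (((hasDerivAt_id z).const_add (a:ℂ)).div_const c).sub_const (1 / c ^ 2)
        simpa using h3
      have h := h1.mul h2
      refine h.congr_deriv ?_
      field_simp
      ring
    have key2 : ∀ z : ℂ, HasDerivAt (fun z : ℂ => Complex.exp (c * z) * (((a:ℂ) - z) / c + 1 / c ^ 2))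
        (Complex.exp (c * z) * ((a : ℂ) - z)) z := by
      intro z
      have h1 : HasDerivAt (fun z : ℂ => Complex.exp (c * z)) (Complex.exp (c * z) * c) z := by
        simpa [mul_comm] using ((hasDerivAt_id z).const_mul c).cexp
      have h2 : HasDerivAt (fun z : ℂ => (((a:ℂ) - z) / c + 1 / c ^ 2)) (-1 / c) z := by
        have h3 := (((hasDerivAt_id z).const_sub (a:ℂ)).div_const c).add_const (1 / c ^ 2)
        simpa using h3
      have h := h1.mul h2
      refine h.congr_deriv ?_
      field_simp
      ring
    have i1 : (∫ ξ in (-a)..(0:ℝ), Complex.exp (c * ξ) * ((a : ℂ) + ξ))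
        = ((a:ℂ) / c - 1 / c ^ 2) + Complex.exp (-(c * a)) / c ^ 2 := by
      rw [intervalIntegral.integral_eq_sub_of_hasDerivAt (fun x _ => (key1 x).comp_ofReal)
        (((Complex.continuous_exp.comp (continuous_const.mul Complex.continuous_ofReal)).mul
          (continuous_const.add Complex.continuous_ofReal)).intervalIntegrable _ _)]
      simp only [Complex.ofReal_neg, Complex.ofReal_zero, mul_zero, Complex.exp_zero]
      rw [show c * -(a:ℂ) = -(c * a) by ring]
      ring
    have i2 : (∫ ξ in (0:ℝ)..a, Complex.exp (c * ξ) * ((a : ℂ) - ξ))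
        = Complex.exp (c * a) / c ^ 2 - ((a:ℂ) / c + 1 / c ^ 2) := by
      rw [intervalIntegral.integral_eq_sub_of_hasDerivAt (fun x _ => (key2 x).comp_ofReal)
        (((Complex.continuous_exp.comp (continuous_const.mul Complex.continuous_ofReal)).mul
          (continuous_const.sub Complex.continuous_ofReal)).intervalIntegrable _ _)]
      simp only [Complex.ofReal_zero, mul_zero, Complex.exp_zero]
      ring
    rw [i1, i2]
    have hca : Complex.exp (c * a) + Complex.exp (-(c * a))
        = ((2 * Real.cos (2 * Real.pi * v * a) : ℝ) : ℂ) := by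
      have h1 : c * a = ((2 * Real.pi * v * a : ℝ) : ℂ) * Complex.I := by rw [hc]; push_cast; ring
      rw [h1, show -(((2 * Real.pi * v * a : ℝ) : ℂ) * Complex.I)
          = ((-(2 * Real.pi * v * a) : ℝ) : ℂ) * Complex.I by push_cast; ring,
        Complex.exp_mul_I, Complex.exp_mul_I, Complex.ofReal_neg, Complex.cos_neg,
        Complex.sin_neg, ← Complex.ofReal_cos]
      push_cast
      ring
    have hc2 : c ^ 2 = -((((2 * Real.pi * v) ^ 2 : ℝ) : ℂ)) := by
      rw [hc, mul_pow, Complex.I_sq]; push_cast; ring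
    have hcomb : ((a:ℂ) / c - 1 / c ^ 2 + Complex.exp (-(c * a)) / c ^ 2)
          + (Complex.exp (c * a) / c ^ 2 - ((a:ℂ) / c + 1 / c ^ 2))
        = (Complex.exp (c * a) + Complex.exp (-(c * a)) - 2) / c ^ 2 := by
      ring
    rw [hcomb, hca, hc2]
    have hr : (2 * Real.cos (2 * Real.pi * v * a) - 2) / (-((2 * Real.pi * v) ^ 2))
        = Real.sin (Real.pi * a * v) ^ 2 / (Real.pi ^ 2 * v ^ 2) := by
      have h2 : Real.cos (2 * Real.pi * v * a) = 1 - 2 * Real.sin (Real.pi * a * v) ^ 2 := by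
        rw [show 2 * Real.pi * v * a = 2 * (Real.pi * a * v) by ring, Real.cos_two_mul]
        have := Real.sin_sq_add_cos_sq (Real.pi * a * v)
        linarith
      rw [h2]
      have h3 : Real.pi ≠ 0 := Real.pi_ne_zero
      field_simp
      ring
    unfold fejC fejR
    rw [if_neg hv, ← hr]
    push_cast
    ring

lemma continuous_fejC (a : ℝ) (ha : 0 < a) : Continuous (fejC a) := by
  rw [← fourierInv_triC a ha]
  exact VectorFourier.fourierIntegral_continuous Real.continuous_fourierChar
    (by exact (continuous_inner : Continuous fun p : ℝ × ℝ => (inner ℝ p.1 p.2 : ℝ)).neg) (integrable_triC a)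

lemma fejC_norm (a t : ℝ) : ‖fejC a t‖ = fejR a t := by
  rw [fejC, Complex.norm_real, Real.norm_eq_abs, _root_.abs_of_nonneg (fejR_nonneg a t)]

lemma fejR_key (a : ℝ) (t : ℝ) : fejR a t * (1 + t ^ 2) ≤ a ^ 2 + 1 / Real.pi ^ 2 := by
  rcases eq_or_ne t 0 with ht | ht
  · rw [ht, fejR_zero]
    have : (0:ℝ) ≤ 1 / Real.pi ^ 2 := by positivity
    nlinarith
  · have h2 := fejR_le_sq a t
    have h3 := fejR_le_inv a ht
    have h4 : fejR a t * t ^ 2 ≤ 1 / Real.pi ^ 2 := by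
      calc fejR a t * t ^ 2 ≤ 1 / (Real.pi ^ 2 * t ^ 2) * t ^ 2 :=
            mul_le_mul_of_nonneg_right h3 (sq_nonneg t)
        _ = 1 / Real.pi ^ 2 := by
            field_simp
    calc fejR a t * (1 + t ^ 2) = fejR a t + fejR a t * t ^ 2 := by ring
      _ ≤ a ^ 2 + 1 / Real.pi ^ 2 := add_le_add h2 h4

lemma integrable_fejC (a : ℝ) (ha : 0 < a) : Integrable (fejC a) := by
  have hbound : ∀ t : ℝ, ‖fejC a t‖ ≤ ‖(a ^ 2 + 1 / Real.pi ^ 2) * ((1 + t ^ 2)⁻¹ : ℝ)‖ := by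
    intro t
    rw [fejC_norm]
    have h1 : (0:ℝ) < 1 + t ^ 2 := by positivity
    have hC : (0:ℝ) ≤ a ^ 2 + 1 / Real.pi ^ 2 := by positivity
    rw [Real.norm_eq_abs, _root_.abs_of_nonneg (by positivity)]
    rw [← div_eq_mul_inv, le_div_iff₀ h1]
    exact fejR_key a t
  exact (integrable_inv_one_add_sq.const_mul _).mono
    (continuous_fejC a ha).aestronglyMeasurable (Eventually.of_forall hbound)

lemma FT_fejC (a : ℝ) (ha : 0 < a) : 𝓕 (fejC a) = triC a := by
  rw [← fourierInv_triC a ha]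
  apply Continuous.fourier_fourierInv_eq (continuous_triC a) (integrable_triC a)
  have h : 𝓕 (triC a) = fun w => fejC a (-w) := by
    funext w
    have := Real.fourierInv_eq_fourier_neg (triC a) (-w)
    rw [neg_neg] at this
    rw [← this, fourierInv_triC a ha]
  rw [h]
  exact (integrable_fejC a ha).comp_neg

lemma fejC_decay_pt (a : ℝ) {x : ℝ} (hx : 1 ≤ |x|) :
    ‖fejC a x‖ ≤ 1 / Real.pi ^ 2 * ‖|x| ^ (-2 : ℝ)‖ := by
  have hx0 : x ≠ 0 := by intro h; rw [h] at hx; simp at hx; linarith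
  have h2 : |x| ^ (-2 : ℝ) = (x ^ 2)⁻¹ := by
    rw [show (-2:ℝ) = ((-2:ℤ):ℝ) by norm_num, Real.rpow_intCast]
    rw [zpow_neg]
    congr 1
    rw [show (2:ℤ) = ((2:ℕ):ℤ) by norm_num, zpow_natCast, _root_.sq_abs]
  rw [fejC_norm, h2, Real.norm_eq_abs, _root_.abs_of_pos (by positivity)]
  calc fejR a x ≤ 1 / (Real.pi ^ 2 * x ^ 2) := fejR_le_inv a hx0
    _ = 1 / Real.pi ^ 2 * (x ^ 2)⁻¹ := by rw [div_mul_eq_div_div, div_eq_mul_inv]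

lemma fejC_decay (a : ℝ) : (fejC a) =O[Filter.cocompact ℝ] (fun x : ℝ => |x| ^ (-2 : ℝ)) := by
  rw [cocompact_eq_atBot_atTop, Asymptotics.isBigO_sup]
  constructor
  · rw [Asymptotics.isBigO_iff]
    refine ⟨1 / Real.pi ^ 2, ?_⟩
    filter_upwards [Filter.eventually_le_atBot (-1 : ℝ)] with x hx
    exact fejC_decay_pt a (by rw [_root_.abs_of_nonpos (by linarith)]; linarith)
  · rw [Asymptotics.isBigO_iff]
    refine ⟨1 / Real.pi ^ 2, ?_⟩
    filter_upwards [Filter.eventually_ge_atTop (1 : ℝ)] with x hx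
    exact fejC_decay_pt a (by rw [_root_.abs_of_nonneg (by linarith)]; linarith)

lemma fej_sum (a : ℝ) (ha : 0 < a) (ha1 : a ≤ 1) (x : ℝ) :
    ∑' l : ℤ, fejR a (x + l) = a := by
  have hsummable : Summable fun n : ℤ => 𝓕 (fejC a) n := by
    rw [FT_fejC a ha]
    apply summable_of_ne_finset_zero (s := ({0} : Finset ℤ))
    intro b hb
    simp only [Finset.mem_singleton] at hb
    have h1 : (1:ℝ) ≤ |(b:ℝ)| := by
      rw [← Int.cast_abs]
      exact_mod_cast Int.one_le_abs (by exact_mod_cast hb)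
    have : a - |(b:ℝ)| ≤ 0 := by linarith
    simp [triC, max_eq_right this]
  have key := Real.tsum_eq_tsum_fourier_of_rpow_decay_of_summable
    (continuous_fejC a ha) one_lt_two (fejC_decay a) hsummable x
  rw [FT_fejC a ha] at key
  have hrhs : (∑' n : ℤ, triC a n * fourier n (x : UnitAddCircle)) = (a : ℂ) := by
    rw [tsum_eq_single 0]
    · simp [triC, abs_of_nonneg, max_eq_left ha.le]
    · intro b hb
      have h1 : (1:ℝ) ≤ |(b:ℝ)| := by
        rw [← Int.cast_abs]
        exact_mod_cast Int.one_le_abs hb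
      have h0 : a - |(b:ℝ)| ≤ 0 := by linarith
      simp [triC, max_eq_right h0]
  rw [hrhs] at key
  have hl : (∑' l : ℤ, fejC a (x + l)) = ((∑' l : ℤ, fejR a (x + l) : ℝ) : ℂ) :=
    (Complex.ofReal_tsum _).symm
  rw [hl] at key
  exact_mod_cast key

lemma fejR_scale (a L t : ℝ) (hL : 0 < L) (l : ℤ) :
    fejR a (t - l / L) = L ^ 2 * fejR (a / L) (L * t - l) := by
  have hL0 : L ≠ 0 := hL.ne'
  have heq : L * t - (l:ℝ) = L * (t - l / L) := by field_simp
  rcases eq_or_ne (t - l / L) 0 with h | h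
  · rw [h, fejR_zero, heq, h, mul_zero, fejR_zero]
    field_simp
  · have h2 : L * t - (l:ℝ) ≠ 0 := by rw [heq]; exact mul_ne_zero hL0 h
    unfold fejR
    rw [if_neg h, if_neg h2, heq]
    have harg : Real.pi * (a / L) * (L * (t - l / L)) = Real.pi * a * (t - l / L) := by
      field_simp
    rw [harg, mul_pow]
    field_simp

lemma fej_sum' (a L t : ℝ) (ha : 0 < a) (hL : 0 < L) (haL : a ≤ L) :
    ∑' l : ℤ, fejR a (t - l / L) = L * a := by
  calc ∑' l : ℤ, fejR a (t - l / L)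
      = ∑' l : ℤ, L ^ 2 * fejR (a / L) (L * t + ((Equiv.neg ℤ) l : ℤ)) := by
        apply tsum_congr; intro l
        rw [fejR_scale a L t hL l]
        have harg : L * t + (((Equiv.neg ℤ) l : ℤ) : ℝ) = L * t - l := by
          push_cast [Equiv.neg_apply]; ring
        rw [harg]
    _ = L ^ 2 * ∑' l : ℤ, fejR (a / L) (L * t + ((Equiv.neg ℤ) l : ℤ)) := tsum_mul_left
    _ = L ^ 2 * ∑' l : ℤ, fejR (a / L) (L * t + (l : ℤ)) := by
        congr 1
        exact (Equiv.neg ℤ).tsum_eq fun l : ℤ => fejR (a / L) (L * t + (l : ℝ))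
    _ = L ^ 2 * (a / L) :=  by
        rw [fej_sum (a / L) (by positivity) (by rw [div_le_one hL]; exact haL) (L * t)]
    _ = L * a := by field_simp

lemma fej_summable (a L t : ℝ) (hL : 0 < L) :
    Summable (fun l : ℤ => fejR a (t - l / L)) := by
  have hsum : Summable (fun l : ℤ => |(l:ℝ)| ^ (-2:ℝ)) := Real.summable_abs_int_rpow one_lt_two
  apply summable_of_isBigO' hsum
  rw [Asymptotics.isBigO_iff]
  refine ⟨4 * L ^ 2 / Real.pi ^ 2, ?_⟩
  rw [Filter.eventually_cofinite]
  apply Set.Finite.subset (Set.finite_Icc (-(⌈1 + 2 * L * |t|⌉)) ⌈1 + 2 * L * |t|⌉)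
  intro l hl
  simp only [Set.mem_setOf_eq] at hl
  rw [Set.mem_Icc]
  by_contra hmem
  apply hl
  have hcpos : 0 < ⌈1 + 2 * L * |t|⌉ :=
    Int.ceil_pos.mpr (by nlinarith [mul_nonneg hL.le (abs_nonneg t)])
  have habs : ⌈1 + 2 * L * |t|⌉ ≤ |l| := by
    rw [not_and_or, not_le, not_le] at hmem
    rcases hmem with h | h <;> rcases abs_cases l with ⟨e1, e2⟩ | ⟨e1, e2⟩ <;> omega
  have hM : (1 + 2 * L * |t| : ℝ) ≤ |(l:ℝ)| := by
    rw [← Int.cast_abs]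
    calc (1 + 2 * L * |t| : ℝ) ≤ (⌈1 + 2 * L * |t|⌉ : ℝ) := Int.le_ceil _
      _ ≤ ((|l| : ℤ) : ℝ) := by exact_mod_cast habs
  have hl1 : (1:ℝ) ≤ |(l:ℝ)| := by nlinarith [abs_nonneg t, hL.le, mul_nonneg hL.le (abs_nonneg t)]
  have hl0 : (l:ℝ) ≠ 0 := by intro h; rw [h] at hl1; simp at hl1; linarith
  have h2L : (0:ℝ) < 2 * L := by linarith
  have hs : |(l:ℝ)| / (2 * L) ≤ |t - (l:ℝ) / L| := by
    rw [div_le_iff₀ h2L]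
    have h1 : |(l:ℝ)| / L - |t| ≤ |t - (l:ℝ) / L| := by
      have h := abs_sub_abs_le_abs_sub ((l:ℝ) / L) t
      rw [abs_sub_comm ((l:ℝ)/L) t, abs_div, _root_.abs_of_pos hL] at h
      linarith
    have h2 : 2 * L * |t| ≤ |(l:ℝ)| := by nlinarith [mul_nonneg hL.le (abs_nonneg t)]
    have e2 : |(l:ℝ)| / L * L = |(l:ℝ)| := by field_simp
    nlinarith [mul_le_mul_of_nonneg_right h1 h2L.le]
  have hsne : t - (l:ℝ) / L ≠ 0 := by
    intro h
    rw [h, abs_zero] at hs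
    have : (0:ℝ) < |(l:ℝ)| / (2 * L) := by positivity
    linarith
  have hrp : |(l:ℝ)| ^ (-2:ℝ) = (((l:ℝ)) ^ 2)⁻¹ := by
    rw [show (-2:ℝ) = ((-2:ℤ):ℝ) by norm_num, Real.rpow_intCast, zpow_neg]
    congr 1
    rw [show (2:ℤ) = ((2:ℕ):ℤ) by norm_num, zpow_natCast, _root_.sq_abs]
  rw [Real.norm_eq_abs, _root_.abs_of_nonneg (fejR_nonneg _ _), Real.norm_eq_abs, hrp,
    _root_.abs_of_pos (by positivity)]
  have hsq : ((l:ℝ)) ^ 2 / (2 * L) ^ 2 ≤ (t - (l:ℝ) / L) ^ 2 := by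
    have := sq_le_sq' (by
      have q1 := abs_nonneg (t - (l:ℝ)/L)
      have q2 : (0:ℝ) ≤ |(l:ℝ)| / (2*L) := div_nonneg (abs_nonneg _) h2L.le
      linarith : -(|t - (l:ℝ)/L|) ≤ |(l:ℝ)| / (2*L)) hs
    calc ((l:ℝ)) ^ 2 / (2 * L) ^ 2 = (|(l:ℝ)| / (2 * L)) ^ 2 := by
          rw [div_pow, _root_.sq_abs]
      _ ≤ |t - (l:ℝ)/L| ^ 2 := this
      _ = (t - (l:ℝ)/L) ^ 2 := _root_.sq_abs _
  calc fejR a (t - (l:ℝ)/L) ≤ 1 / (Real.pi ^ 2 * (t - (l:ℝ)/L) ^ 2) := fejR_le_inv a hsne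
    _ ≤ 1 / (Real.pi ^ 2 * (((l:ℝ)) ^ 2 / (2 * L) ^ 2)) := by
        apply one_div_le_one_div_of_le
        · have hl2 : (0:ℝ) < ((l:ℝ)) ^ 2 := (sq_nonneg _).lt_of_ne (Ne.symm (pow_ne_zero 2 hl0))
          exact mul_pos (by positivity) (div_pos hl2 (by positivity))
        · exact mul_le_mul_of_nonneg_left hsq (sq_nonneg Real.pi)
    _ = 4 * L ^ 2 / Real.pi ^ 2 * (((l:ℝ)) ^ 2)⁻¹ := by
        field_simp
        ring

/-- the periodization of the trapezoidal kernel is bounded by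
`sqrt((L_ε + 1)/(L_ε − 1))`. -/
theorem stmt6 (Leps L : ℝ) (hLeps : 1 < Leps) (hL : (Leps + 1) / 2 ≤ L) :
    (⨆ t : ℝ, ENNReal.ofReal (1 / L) *
        ∑' l : ℤ, (‖trapKernel Leps Real.pi (t - (l : ℝ) / L)‖₊ : ℝ≥0∞)) ≤
      ENNReal.ofReal (Real.sqrt ((Leps + 1) / (Leps - 1))) := by
  set A := (Leps + 1) / 2 with hA
  set Bb := (Leps - 1) / 2 with hBb
  have hA1 : (1:ℝ) < A := by rw [hA]; linarith
  have hBb0 : (0:ℝ) < Bb := by rw [hBb]; linarith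
  have hABb : Bb < A := by rw [hA, hBb]; linarith
  have hL0 : (0:ℝ) < L := lt_of_lt_of_le (by linarith) hL
  set r := Real.sqrt (A * Bb) with hr
  have hr0 : 0 < r := Real.sqrt_pos.mpr (by positivity)
  have hr2 : r ^ 2 = A * Bb := Real.sq_sqrt (by positivity)
  have hpq : r / A * (r / Bb) = 1 := by
    field_simp
    nlinarith [hr2]
  have hpt : ∀ s : ℝ, |trapKernel Leps Real.pi s| ≤
      1 / (2 * Bb) * (r / A * fejR A s + r / Bb * fejR Bb s) := by
    intro s
    rcases eq_or_ne s 0 with hs | hs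
    · rw [hs]
      unfold trapKernel
      rw [if_pos rfl, fejR_zero, fejR_zero]
      have h1 : (Leps + 1) * Real.pi / (2 * Real.pi) = A := by
        rw [hA]; field_simp
      rw [h1, _root_.abs_of_pos (by linarith)]
      have key : 2 * A * Bb ≤ r * (A + Bb) := by
        have e1 : r = Real.sqrt A * Real.sqrt Bb := by rw [hr, Real.sqrt_mul (by positivity)]
        nlinarith [mul_nonneg (mul_nonneg (Real.sqrt_nonneg A) (Real.sqrt_nonneg Bb))
            (sq_nonneg (Real.sqrt A - Real.sqrt Bb)),
          Real.sq_sqrt (by positivity : (0:ℝ) ≤ A), Real.sq_sqrt hBb0.le]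
      have e2 : 1 / (2 * Bb) * (r / A * A ^ 2 + r / Bb * Bb ^ 2) = r * (A + Bb) / (2 * Bb) := by
        field_simp
      rw [e2, le_div_iff₀ (by positivity)]
      linarith
    · unfold trapKernel
      rw [if_neg hs]
      have e1 : (Leps + 1) * Real.pi * s / 2 = Real.pi * A * s := by rw [hA]; ring
      have e2 : (Leps - 1) * Real.pi * s / 2 = Real.pi * Bb * s := by rw [hBb]; ring
      have e3 : Real.pi * (Leps - 1) * Real.pi * s ^ 2 = 2 * Bb * (Real.pi ^ 2 * s ^ 2) := by
        rw [hBb]; ring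
      rw [e1, e2, e3]
      set u := |Real.sin (Real.pi * A * s)| with hu
      set v := |Real.sin (Real.pi * Bb * s)| with hv
      have key2 : 2 * (u * v) ≤ r / A * u ^ 2 + r / Bb * v ^ 2 := by
        have hp : (0:ℝ) < r / A := by positivity
        have expand : r / A * (r / A * u ^ 2 + r / Bb * v ^ 2 - 2 * (u * v))
            = (r / A * u - v) ^ 2 + (r / A * (r / Bb) - 1) * v ^ 2 := by ring
        have h3 : 0 ≤ r / A * (r / A * u ^ 2 + r / Bb * v ^ 2 - 2 * (u * v)) := by
          rw [expand, hpq]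
          simp only [sub_self, zero_mul, add_zero]
          exact sq_nonneg _
        nlinarith [h3, hp]
      have hD : (0:ℝ) < 2 * Bb * (Real.pi ^ 2 * s ^ 2) := by positivity
      rw [abs_div, _root_.abs_of_pos hD, div_le_iff₀ hD]
      have eRHS : 1 / (2 * Bb) * (r / A * fejR A s + r / Bb * fejR Bb s)
            * (2 * Bb * (Real.pi ^ 2 * s ^ 2))
          = r / A * Real.sin (Real.pi * A * s) ^ 2 + r / Bb * Real.sin (Real.pi * Bb * s) ^ 2 := by
        unfold fejR
        rw [if_neg hs, if_neg hs]
        field_simp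
      rw [eRHS]
      have eLHS : |2 * Real.sin (Real.pi * A * s) * Real.sin (Real.pi * Bb * s)|
          = 2 * (u * v) := by
        rw [abs_mul, abs_mul, _root_.abs_two, hu, hv]
        ring
      rw [eLHS]
      have hsqu : u ^ 2 = Real.sin (Real.pi * A * s) ^ 2 := _root_.sq_abs _
      have hsqv : v ^ 2 = Real.sin (Real.pi * Bb * s) ^ 2 := _root_.sq_abs _
      rw [← hsqu, ← hsqv]
      exact key2
  apply iSup_le
  intro t
  have hsumA : Summable (fun l : ℤ => fejR A (t - l / L)) := fej_summable A L t hL0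
  have hsumB : Summable (fun l : ℤ => fejR Bb (t - l / L)) := fej_summable Bb L t hL0
  set g : ℤ → ℝ := fun l =>
    1 / (2 * Bb) * (r / A * fejR A (t - l / L) + r / Bb * fejR Bb (t - l / L)) with hg
  have hg_sum : Summable g := (((hsumA.mul_left _).add (hsumB.mul_left _)).mul_left _)
  have hg_nonneg : ∀ l, 0 ≤ g l := by
    intro l
    apply mul_nonneg (by positivity)
    apply add_nonneg
    · exact mul_nonneg (by positivity) (fejR_nonneg _ _)
    · exact mul_nonneg (by positivity) (fejR_nonneg _ _)
  have htsum_g : ∑' l : ℤ, g l = L * r / Bb := by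
    rw [hg]
    rw [tsum_mul_left, Summable.tsum_add (hsumA.mul_left _) (hsumB.mul_left _), tsum_mul_left,
      tsum_mul_left, fej_sum' A L t (by linarith) hL0 hL,
      fej_sum' Bb L t hBb0 hL0 (by linarith)]
    field_simp
    ring
  calc ENNReal.ofReal (1 / L) *
        ∑' l : ℤ, (‖trapKernel Leps Real.pi (t - (l : ℝ) / L)‖₊ : ℝ≥0∞)
      ≤ ENNReal.ofReal (1 / L) * ∑' l : ℤ, ENNReal.ofReal (g l) := by
        apply mul_le_mul_right
        apply ENNReal.tsum_le_tsum
        intro l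
        rw [← enorm_eq_nnnorm, ← ofReal_norm, Real.norm_eq_abs]
        exact ENNReal.ofReal_le_ofReal (hpt _)
    _ = ENNReal.ofReal (1 / L) * ENNReal.ofReal (∑' l : ℤ, g l) := by
        rw [ENNReal.ofReal_tsum_of_nonneg hg_nonneg hg_sum]
    _ = ENNReal.ofReal (1 / L * (L * r / Bb)) := by
        rw [htsum_g, ← ENNReal.ofReal_mul (by positivity)]
    _ = ENNReal.ofReal (r / Bb) := by
        congr 1
        field_simp
    _ = ENNReal.ofReal (Real.sqrt ((Leps + 1) / (Leps - 1))) := by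
        congr 1
        have hq : (Leps + 1) / (Leps - 1) = A / Bb := by
          rw [hA, hBb]
          field_simp
        rw [hq, hr, show A * Bb = A / Bb * Bb ^ 2 by field_simp,
          Real.sqrt_mul (by positivity) , Real.sqrt_sq hBb0.le]
        field_simp
end

section
/- Let n >= 1 be a natural number and K_n the triangle kernel. Then for every real a with 0 < a <= 2 and every t ∈ ℝ, the series Σ_{l∈ℤ} K_n(t − l·a·n) converges and equals 1/(a·n). -/
open MeasureTheory Real Set
open scoped ENNReal NNReal

section Stmt10Aux
open scoped FourierTransform

noncomputable def Saux (x : ℝ) : ℝ :=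
  if x = 0 then 1 else Real.sin (Real.pi * x) ^ 2 / (Real.pi ^ 2 * x ^ 2)

noncomputable def Taux (ξ : ℝ) : ℂ := ((max (1 - |ξ|) 0 : ℝ) : ℂ)

lemma Saux_nonneg (x : ℝ) : 0 ≤ Saux x := by
  unfold Saux
  split
  · norm_num
  · positivity

lemma Saux_le_one (x : ℝ) : Saux x ≤ 1 := by
  unfold Saux
  split
  · norm_num
  · rename_i hx
    rw [div_le_one (by positivity)]
    calc Real.sin (Real.pi * x) ^ 2 ≤ (Real.pi * x) ^ 2 := Real.sin_sq_le_sq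
      _ = Real.pi ^ 2 * x ^ 2 := by ring

lemma Saux_le_inv_sq (x : ℝ) (hx : x ≠ 0) : Saux x ≤ 1 / x ^ 2 := by
  unfold Saux
  rw [if_neg hx]
  rw [div_le_div_iff₀ (by positivity) (by positivity)]
  have h1 : Real.sin (Real.pi * x) ^ 2 ≤ 1 := Real.sin_sq_le_one _
  have h2 : (1:ℝ) ≤ Real.pi ^ 2 := by nlinarith [Real.pi_gt_three]
  nlinarith [sq_nonneg x, sq_nonneg (Real.sin (Real.pi * x))]

lemma Saux_even (x : ℝ) : Saux (-x) = Saux x := by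
  unfold Saux
  simp [neg_eq_zero, mul_neg, Real.sin_neg, neg_sq]

lemma Saux_le_bound (x : ℝ) : Saux x ≤ 2 / (1 + x ^ 2) := by
  rcases le_or_gt (x ^ 2) 1 with h | h
  · calc Saux x ≤ 1 := Saux_le_one x
      _ ≤ 2 / (1 + x ^ 2) := by rw [le_div_iff₀ (by positivity)]; nlinarith
  · have hx : x ≠ 0 := by intro h0; rw [h0] at h; norm_num at h
    calc Saux x ≤ 1 / x ^ 2 := Saux_le_inv_sq x hx
      _ ≤ 2 / (1 + x ^ 2) := by
        rw [div_le_div_iff₀ (by positivity) (by positivity)]; nlinarith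

/-- the basic interval integral -/
lemma integral_one_sub_mul_cos (θ : ℝ) :
    ∫ v in (0:ℝ)..1, (1 - v) * Real.cos (θ * v)
      = if θ = 0 then 1/2 else (1 - Real.cos θ) / θ ^ 2 := by
  rcases eq_or_ne θ 0 with h | h
  · simp only [h, if_pos rfl, zero_mul, Real.cos_zero, mul_one]
    rw [intervalIntegral.integral_sub intervalIntegrable_const
      (intervalIntegral.intervalIntegrable_id)]
    simp
    norm_num
  · rw [if_neg h]
    have key : ∀ v ∈ Set.uIcc (0:ℝ) 1, HasDerivAt
        (fun v => (1 - v) * Real.sin (θ * v) / θ - Real.cos (θ * v) / θ ^ 2)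
        ((1 - v) * Real.cos (θ * v)) v := by
      intro v _
      have h1 : HasDerivAt (fun v : ℝ => θ * v) θ v := by
        simpa using (hasDerivAt_id v).const_mul θ
      have hs : HasDerivAt (fun v => Real.sin (θ * v)) (Real.cos (θ * v) * θ) v :=
        (Real.hasDerivAt_sin (θ * v)).comp v h1
      have hc : HasDerivAt (fun v => Real.cos (θ * v)) (-Real.sin (θ * v) * θ) v :=
        (Real.hasDerivAt_cos (θ * v)).comp v h1
      have h2 : HasDerivAt (fun v : ℝ => 1 - v) (-1) v := by
        simpa using (hasDerivAt_id v).const_sub 1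
      have := ((h2.mul hs).div_const θ).sub (hc.div_const (θ ^ 2))
      refine this.congr_deriv ?_
      field_simp
      ring
    rw [intervalIntegral.integral_eq_sub_of_hasDerivAt key
      (Continuous.intervalIntegrable (by continuity) _ _)]
    simp only [mul_one, mul_zero, Real.sin_zero, Real.cos_zero]
    field_simp
    ring

lemma Taux_integrable : Integrable Taux := by
  have hc : Continuous Taux := by
    unfold Taux
    fun_prop
  apply hc.integrable_of_hasCompactSupport
  apply HasCompactSupport.intro (isCompact_Icc (a := (-1:ℝ)) (b := 1))
  intro x hx
  simp only [Set.mem_Icc, not_and_or, not_le] at hx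
  have : (1:ℝ) ≤ |x| := by
    rcases hx with h | h
    · rw [abs_of_neg (by linarith)]; linarith
    · rw [abs_of_pos (by linarith)]; linarith
  unfold Taux
  rw [max_eq_right (by linarith)]
  simp

lemma exp_add_exp_neg (c : ℝ) :
    Complex.exp ((c : ℂ) * Complex.I) + Complex.exp (((-c : ℝ) : ℂ) * Complex.I)
      = ((2 * Real.cos c : ℝ) : ℂ) := by
  rw [Complex.exp_mul_I, Complex.exp_mul_I]
  push_cast
  simp only [Complex.cos_neg, Complex.sin_neg]
  ring

lemma fourierInv_Taux (x : ℝ) : 𝓕⁻ Taux x = (Saux x : ℂ) := by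
  set θ : ℝ := 2 * Real.pi * x with hθdef
  set F : ℝ → ℂ := fun v => Complex.exp (((θ * v : ℝ) : ℂ) * Complex.I) • Taux v with hF
  have hFcont : Continuous F := by
    rw [hF]; unfold Taux; fun_prop
  have h1 : 𝓕⁻ Taux x = ∫ v : ℝ, F v := by
    rw [Real.fourierInv_eq']
    congr 1
    funext v
    have hinner : (2 * Real.pi * (inner ℝ v x : ℝ) : ℝ) = θ * v := by
      simp only [RCLike.inner_apply, conj_trivial, hθdef]
      ring
    rw [hF]
    simp only [hinner]
  have hsupp : ∀ v : ℝ, v ∉ Icc (-1:ℝ) 1 → F v = 0 := by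
    intro v hv
    have hT : Taux v = 0 := by
      simp only [Set.mem_Icc, not_and_or, not_le] at hv
      have : (1:ℝ) ≤ |v| := by
        rcases hv with h | h
        · rw [abs_of_neg (by linarith)]; linarith
        · rw [abs_of_pos (by linarith)]; linarith
      unfold Taux
      rw [max_eq_right (by linarith)]
      simp
    simp [hF, hT]
  have h2 : (∫ v : ℝ, F v) = ∫ v in (-1:ℝ)..1, F v := by
    rw [intervalIntegral.integral_of_le (by norm_num : (-1:ℝ) ≤ 1),
      ← MeasureTheory.integral_Icc_eq_integral_Ioc,
      ← MeasureTheory.integral_indicator measurableSet_Icc,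
      Set.indicator_eq_self.2 (Function.support_subset_iff'.2 hsupp)]
  have h3 : (∫ v in (-1:ℝ)..1, F v) = (∫ v in (0:ℝ)..1, F (-v)) + ∫ v in (0:ℝ)..1, F v := by
    rw [intervalIntegral.integral_comp_neg, neg_zero]
    exact (intervalIntegral.integral_add_adjacent_intervals
      (hFcont.intervalIntegrable _ _) (hFcont.intervalIntegrable _ _)).symm
  have h4 : ∀ v ∈ Set.uIcc (0:ℝ) 1,
      F (-v) + F v = ((2 * ((1 - v) * Real.cos (θ * v)) : ℝ) : ℂ) := by
    intro v hv
    rw [Set.uIcc_of_le (by norm_num)] at hv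
    obtain ⟨hv0, hv1⟩ := hv
    have habs : |(-v : ℝ)| = v := by rw [abs_neg, abs_of_nonneg hv0]
    have habs2 : |v| = v := abs_of_nonneg hv0
    rw [hF]
    simp only
    unfold Taux
    rw [habs, habs2, smul_eq_mul, smul_eq_mul, ← add_mul, mul_neg,
      add_comm (Complex.exp _) (Complex.exp _), exp_add_exp_neg (θ * v),
      max_eq_left (by linarith)]
    push_cast
    ring
  have h5 : (∫ v in (0:ℝ)..1, F (-v)) + ∫ v in (0:ℝ)..1, F v
      = ∫ v in (0:ℝ)..1, (((2 * ((1 - v) * Real.cos (θ * v)) : ℝ)) : ℂ) := by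
    have hFneg : Continuous fun v : ℝ => F (-v) := hFcont.comp continuous_neg
    rw [← intervalIntegral.integral_add (f := fun v => F (-v)) (g := F)
      (hFneg.intervalIntegrable _ _) (hFcont.intervalIntegrable _ _)]
    exact intervalIntegral.integral_congr h4
  have hreal : (∫ v in (0:ℝ)..1, 2 * ((1 - v) * Real.cos (θ * v))) = Saux x := by
    rw [intervalIntegral.integral_const_mul, integral_one_sub_mul_cos θ]
    rcases eq_or_ne x 0 with hx | hx
    · have hθ : θ = 0 := by rw [hθdef, hx, mul_zero]
      rw [if_pos hθ, hx]
      unfold Saux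
      norm_num
    · have hθ : θ ≠ 0 := by
        rw [hθdef]
        exact mul_ne_zero (mul_ne_zero two_ne_zero Real.pi_ne_zero) hx
      rw [if_neg hθ]
      unfold Saux
      rw [if_neg hx, Real.sin_sq_eq_half_sub]
      have hcos : Real.cos (2 * (Real.pi * x)) = Real.cos θ := by
        rw [hθdef]; ring_nf
      rw [hcos, hθdef]
      have hπ := Real.pi_ne_zero
      field_simp
  rw [h1, h2, h3, h5, intervalIntegral.integral_ofReal, hreal]

lemma Saux_cont : Continuous fun x => (Saux x : ℂ) := by
  have : Continuous (𝓕⁻ Taux) := by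
    apply VectorFourier.fourierIntegral_continuous Real.continuous_fourierChar
      (by exact (continuous_inner (𝕜 := ℝ) (E := ℝ)).neg) Taux_integrable
  exact this.congr fun x => fourierInv_Taux x

lemma Saux_integrable : Integrable fun x => (Saux x : ℂ) := by
  apply Integrable.mono (g := fun x : ℝ => 2 / (1 + x ^ 2))
  · simpa [div_eq_mul_inv] using (integrable_inv_one_add_sq.const_mul 2)
  · exact Saux_cont.aestronglyMeasurable
  · filter_upwards with x
    rw [Complex.norm_real, Real.norm_eq_abs, Real.norm_eq_abs,
      abs_of_nonneg (Saux_nonneg x), abs_of_nonneg (by positivity)]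
    exact Saux_le_bound x

lemma fourier_Saux : 𝓕 (fun x => (Saux x : ℂ)) = Taux := by
  have h1 : 𝓕⁻ Taux = fun x => (Saux x : ℂ) := funext fourierInv_Taux
  have h2 : 𝓕 Taux = fun x => (Saux x : ℂ) := by
    funext x
    rw [show 𝓕 Taux x = 𝓕⁻ Taux (-x) by
      rw [Real.fourierInv_eq_fourier_neg, neg_neg]]
    rw [fourierInv_Taux, Saux_even]
  rw [← h1]
  apply Continuous.fourier_fourierInv_eq
  · unfold Taux; fun_prop
  · exact Taux_integrable
  · rw [h2]; exact Saux_integrable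

theorem poisson_Saux {b : ℝ} (hb0 : 0 < b) (hb1 : b ≤ 1) (x : ℝ) :
    ∑' l : ℤ, ((Saux (x + b * l) : ℝ) : ℂ) = ((1 / b : ℝ) : ℂ) := by
  have hbne : b ≠ 0 := hb0.ne'
  set f : ℝ → ℂ := fun y => ((Saux (b * y) : ℝ) : ℂ) with hf
  have hc : Continuous f := Saux_cont.comp (continuous_const.mul continuous_id)
  have hb' : ∀ y : ℝ, 1 ≤ |y| → ‖f y‖ ≤ 1 / b ^ 2 * ‖|y| ^ (-2 : ℝ)‖ := by
    intro y hy
    have hy0 : y ≠ 0 := by intro h; rw [h, abs_zero] at hy; linarith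
    have h1 : ‖f y‖ = Saux (b * y) := by
      rw [hf]
      simp only [Complex.norm_real, Real.norm_eq_abs]
      exact abs_of_nonneg (Saux_nonneg _)
    have h2 : Saux (b * y) ≤ 1 / (b * y) ^ 2 := Saux_le_inv_sq _ (mul_ne_zero hbne hy0)
    have h3 : ‖|y| ^ (-2 : ℝ)‖ = 1 / y ^ 2 := by
      rw [Real.norm_eq_abs, abs_of_nonneg (Real.rpow_nonneg (abs_nonneg y) _),
        Real.rpow_neg (abs_nonneg y),
        show ((2:ℝ)) = ((2:ℕ):ℝ) by norm_num, Real.rpow_natCast, sq_abs, one_div]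
    rw [h1, h3]
    calc Saux (b * y) ≤ 1 / (b * y) ^ 2 := h2
      _ = 1 / b ^ 2 * (1 / y ^ 2) := by rw [mul_pow]; field_simp
  have hdecay : f =O[Filter.cocompact ℝ] (fun y : ℝ => |y| ^ (-2 : ℝ)) := by
    rw [cocompact_eq_atBot_atTop]
    refine Asymptotics.IsBigO.sup ?_ ?_
    · exact Asymptotics.IsBigO.of_bound _
        ((Filter.eventually_le_atBot (-1:ℝ)).mono fun y hy =>
          hb' y (by rw [abs_of_neg (by linarith)]; linarith))
    · exact Asymptotics.IsBigO.of_bound _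
        ((Filter.eventually_ge_atTop (1:ℝ)).mono fun y hy =>
          hb' y (by rw [abs_of_pos (by linarith)]; linarith))
  have hFT : ∀ ξ : ℝ, 𝓕 f ξ = (1 / b : ℝ) • Taux (ξ / b) := by
    intro ξ
    set G : ℝ → ℂ := fun u =>
      (Real.fourierChar (-(inner ℝ u (ξ / b) : ℝ)) : Circle) • ((Saux u : ℝ) : ℂ) with hG
    have key : (fun y : ℝ => (Real.fourierChar (-(inner ℝ y ξ : ℝ)) : Circle) • f y)
        = fun y => G (b * y) := by
      funext y
      rw [hG, hf]
      simp only [RCLike.inner_apply, conj_trivial]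
      congr 2
      field_simp
    have h1 : 𝓕 f ξ = ∫ y : ℝ, G (b * y) := by
      rw [Real.fourier_eq, ← key]
    rw [h1, MeasureTheory.Measure.integral_comp_mul_left G b]
    have h2 : (∫ u : ℝ, G u) = 𝓕 (fun u => ((Saux u : ℝ) : ℂ)) (ξ / b) := by
      rw [Real.fourier_eq]
    rw [h2, fourier_Saux, abs_of_pos (inv_pos.mpr hb0), one_div]
  have hFTint : ∀ m : ℤ, 𝓕 f m = if m = 0 then ((1/b:ℝ):ℂ) else 0 := by
    intro m
    rw [hFT]
    rcases eq_or_ne m 0 with h | h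
    · rw [if_pos h, h]
      unfold Taux
      norm_num [Complex.real_smul]
    · rw [if_neg h]
      have hm1 : (1:ℝ) ≤ |(m:ℝ)| := by
        rw [← Int.cast_abs]
        exact_mod_cast Int.one_le_abs (by simpa using h)
      have : (1:ℝ) ≤ |(m:ℝ) / b| := by
        rw [abs_div, abs_of_pos hb0]
        rw [le_div_iff₀ hb0]
        nlinarith
      unfold Taux
      rw [max_eq_right (by linarith)]
      simp
  have hsum : Summable fun m : ℤ => 𝓕 f m := by
    apply summable_of_ne_finset_zero (s := ({0} : Finset ℤ))
    intro m hm
    rw [hFTint m, if_neg (by simpa using hm)]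
  have hP := Real.tsum_eq_tsum_fourier_of_rpow_decay_of_summable hc
    (by norm_num : (1:ℝ) < 2) hdecay hsum (x / b)
  have hL : (∑' l : ℤ, f (x / b + l)) = ∑' l : ℤ, ((Saux (x + b * l) : ℝ) : ℂ) := by
    congr 1
    funext l
    rw [hf]
    field_simp
  have hR : (∑' l : ℤ, 𝓕 f l * fourier l ((x / b : ℝ) : UnitAddCircle)) = ((1/b:ℝ):ℂ) := by
    rw [tsum_eq_single (0 : ℤ) (by
      intro m hm
      rw [hFTint m, if_neg hm, zero_mul])]
    rw [hFTint 0, if_pos rfl]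
    simp [fourier_zero]
  rw [← hL, hP, hR]

lemma triKernel_eq (n : ℕ) (hn : 1 ≤ n) (u : ℝ) :
    triKernel n u = 1 / (2 * n) * Saux (u / (2 * n)) := by
  have hn0 : (n : ℝ) ≠ 0 := Nat.cast_ne_zero.mpr (by omega)
  have h2n : (2 * n : ℝ) ≠ 0 := by positivity
  unfold triKernel Saux
  rcases eq_or_ne u 0 with h | h
  · rw [if_pos h, h, zero_div, if_pos rfl, mul_one]
  · rw [if_neg h, if_neg (div_ne_zero h h2n)]
    rw [show Real.pi * (u / (2 * n)) = Real.pi * u / (2 * n) by ring]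
    field_simp

end Stmt10Aux

/-- sub-sampling property of the triangle kernel (Lemma 1). -/
theorem stmt10 (n : ℕ) (hn : 1 ≤ n) (a : ℝ) (ha : 0 < a) (ha2 : a ≤ 2) (t : ℝ) :
    (Summable fun l : ℤ => triKernel n (t - (l : ℝ) * a * (n : ℝ))) ∧
    ∑' l : ℤ, triKernel n (t - (l : ℝ) * a * (n : ℝ)) = 1 / (a * (n : ℝ)) := by
  have hn0 : (0:ℝ) < n := by exact_mod_cast Nat.pos_of_ne_zero (by omega)
  set b : ℝ := a / 2 with hbdef
  have hb0 : 0 < b := by positivity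
  have hb1 : b ≤ 1 := by rw [hbdef]; linarith
  set x0 : ℝ := t / (2 * n) with hx0def
  have harg : ∀ l : ℤ, (t - (l : ℝ) * a * n) / (2 * n) = x0 + b * ((-l : ℤ) : ℝ) := by
    intro l
    push_cast
    rw [hx0def, hbdef]
    field_simp
    ring
  have hterm : ∀ l : ℤ, triKernel n (t - (l : ℝ) * a * n)
      = 1 / (2 * n) * Saux (x0 + b * ((-l : ℤ) : ℝ)) := by
    intro l
    rw [triKernel_eq n hn, harg l]
  have hcsum : (∑' l : ℤ, ((Saux (x0 + b * ((-l : ℤ) : ℝ)) : ℝ) : ℂ)) = ((1/b:ℝ):ℂ) := by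
    have := (Equiv.neg ℤ).tsum_eq (f := fun m : ℤ => ((Saux (x0 + b * (m : ℝ)) : ℝ) : ℂ))
    simp only [Equiv.neg_apply] at this
    rw [this, poisson_Saux hb0 hb1 x0]
  have hsummable : Summable fun l : ℤ => ((Saux (x0 + b * ((-l : ℤ) : ℝ)) : ℝ) : ℂ) := by
    by_contra hns
    rw [tsum_eq_zero_of_not_summable hns] at hcsum
    have : (1/b : ℝ) = 0 := by exact_mod_cast hcsum.symm
    have : (0:ℝ) < 1/b := by positivity
    linarith [this]
  have hrsummable : Summable fun l : ℤ => Saux (x0 + b * ((-l : ℤ) : ℝ)) :=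
    Complex.summable_ofReal.mp hsummable
  have hrsum : (∑' l : ℤ, Saux (x0 + b * ((-l : ℤ) : ℝ))) = 1/b := by
    have := Complex.ofReal_tsum (L := SummationFilter.unconditional ℤ) (fun l : ℤ => Saux (x0 + b * ((-l : ℤ) : ℝ)))
    rw [hcsum] at this
    exact_mod_cast this
  constructor
  · exact (summable_congr hterm).mpr (hrsummable.mul_left _)
  · calc ∑' l : ℤ, triKernel n (t - (l : ℝ) * a * n)
        = ∑' l : ℤ, 1 / (2 * n) * Saux (x0 + b * ((-l : ℤ) : ℝ)) := by
          exact tsum_congr hterm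
      _ = 1 / (2 * n) * ∑' l : ℤ, Saux (x0 + b * ((-l : ℤ) : ℝ)) := tsum_mul_left
      _ = 1 / (2 * n) * (1 / b) := by rw [hrsum]
      _ = 1 / (a * n) := by rw [hbdef]; field_simp
end

section
/- Let n >= 1 be a natural number and let m > 0 be a real number with 2m ∈ ℕ (so 2(n+m) is a positive integer). Set L = (n+m)/n and let g(t) = K_n(t) · Σ_{k=−n}^{n} e^{i k π t / n} be the trapezoidal kernel with L_eps = (n+1)/n and B = π. Then for every t ∈ ℝ, (1/L) Σ_{l∈ℤ} |g(t − l/L)| = (1/(2(n+m))) Σ_{l=0}^{2(n+m)−1} |Σ_{k=−n}^{n} e^{i k (π t / n − l π/(n+m))}|. -/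
open MeasureTheory Real Set
open scoped ENNReal NNReal

section Aux
open Filter Topology

noncomputable def hN (u : ℝ) (N : ℕ) (j : ℤ) : ℝ :=
  π^2 / (4^N * Real.sin (π * (u + j) / 2^N)^2)

noncomputable def gg (u : ℝ) (M : ℕ) (j : ℤ) : ℝ :=
  if -(2^M:ℤ) ≤ j ∧ j < 2^M then hN u (M+1) j else 0

lemma halving {θ : ℝ} (h : Real.sin θ ≠ 0) :
    1 / Real.sin (θ/2)^2 + 1 / Real.sin (θ/2 + π/2)^2 = 4 / Real.sin θ ^ 2 := by
  have h2 : Real.sin θ = 2 * Real.sin (θ/2) * Real.cos (θ/2) := by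
    have := Real.sin_two_mul (θ/2)
    rw [show 2*(θ/2) = θ by ring] at this; exact this
  have hs : Real.sin (θ/2) ≠ 0 := by intro hs; rw [h2, hs] at h; simp at h
  have hc : Real.cos (θ/2) ≠ 0 := by intro hc; rw [h2, hc] at h; simp at h
  have hpy := Real.sin_sq_add_cos_sq (θ/2)
  rw [Real.sin_add_pi_div_two, h2]
  field_simp
  nlinarith [hpy]

lemma sin_ne (u : ℝ) (hu : ∀ p : ℤ, u ≠ p) (N : ℕ) (j : ℤ) :
    Real.sin (π * (u + j) / 2^N) ≠ 0 := by
  intro h0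
  rw [Real.sin_eq_zero_iff] at h0
  obtain ⟨p, hp⟩ := h0
  apply hu (p * 2^N - j)
  have h2 : (0:ℝ) < 2^N := by positivity
  have hπ : (0:ℝ) < π := Real.pi_pos
  push_cast
  field_simp at hp
  nlinarith [hp]

lemma claim1 (u : ℝ) (hu : ∀ p : ℤ, u ≠ p) (N : ℕ) :
    ∑ k ∈ Finset.range (2^N), hN u N k = π^2 / Real.sin (π * u)^2 := by
  induction N with
  | zero => simp [hN]
  | succ N ih =>
    rw [← ih]
    have hsplit : 2^(N+1) = 2^N + 2^N := by ring
    rw [hsplit, Finset.sum_range_add, ← Finset.sum_add_distrib]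
    apply Finset.sum_congr rfl
    intro k _
    have hne := sin_ne u hu N k
    have key := halving hne
    set θ := π * (u + (k:ℤ)) / 2^N with hθ
    have h2N : (2:ℝ)^(N+1) ≠ 0 := by positivity
    have e1 : π * (u + ((k:ℕ):ℤ)) / 2^(N+1) = θ / 2 := by rw [hθ]; push_cast; ring
    have e2 : π * (u + ((2^N + k : ℕ) : ℤ)) / 2^(N+1) = θ / 2 + π / 2 := by
      rw [hθ]; push_cast
      field_simp
      ring
    unfold hN
    rw [e1, e2]
    have : π^2 / (4^(N+1) * Real.sin (θ/2)^2) + π^2 / (4^(N+1) * Real.sin (θ/2+π/2)^2)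
        = π^2/4^(N+1) * (1/Real.sin (θ/2)^2 + 1/Real.sin (θ/2+π/2)^2) := by ring
    rw [this, key]
    have h4 : (4:ℝ)^(N+1) = 4 * 4^N := by ring
    rw [h4, div_mul_div_comm, show π^2*4 = 4*π^2 by ring,
      show (4*4^N)*Real.sin θ^2 = 4*(4^N*Real.sin θ^2) by ring,
      mul_div_mul_left _ _ (by norm_num : (4:ℝ) ≠ 0)]

lemma hN_per (u : ℝ) (M : ℕ) (j : ℤ) : hN u (M+1) (j + 2^(M+1)) = hN u (M+1) j := by
  unfold hN
  congr 2
  have e : π * (u + (j + 2^(M+1) : ℤ)) / 2^(M+1) = π * (u + j) / 2^(M+1) + π := by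
    have h2 : (2:ℝ)^(M+1) ≠ 0 := by positivity
    push_cast
    field_simp
    ring
  rw [e]
  rw [show π * (u+(j:ℝ))/2^(M+1) + π = π - (-(π * (u+(j:ℝ))/2^(M+1))) by ring,
    Real.sin_pi_sub, Real.sin_neg]
  ring

lemma claim2 (u : ℝ) (hu : ∀ p : ℤ, u ≠ p) (M : ℕ) :
    ∑' j : ℤ, gg u M j = π^2 / Real.sin (π * u)^2 := by
  set T : ℕ := 2^M with hTdef
  have hT : ((2:ℤ)^M) = ((T:ℕ):ℤ) := by rw [hTdef]; push_cast; ring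
  have hgg : ∀ j : ℤ, gg u M j = if -(T:ℤ) ≤ j ∧ j < (T:ℤ) then hN u (M+1) j else 0 := by
    intro j; rw [gg, hT]
  clear_value T
  set S : Finset ℤ := (Finset.range (2*T)).image (fun k : ℕ => (k:ℤ) - (T:ℤ)) with hS
  have h1 : ∑' j : ℤ, gg u M j = ∑ j ∈ S, gg u M j := by
    apply tsum_eq_sum
    intro j hj
    rw [hgg, if_neg]
    rintro ⟨hl, hr⟩
    apply hj
    rw [hS]
    simp only [Finset.mem_image, Finset.mem_range]
    exact ⟨(j + T).toNat, by omega, by omega⟩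
  rw [h1, hS, Finset.sum_image (by intro a _ b _ h; have h' : (a:ℤ) - T = (b:ℤ) - T := h; omega)]
  have h2 : ∀ k ∈ Finset.range (2*T), gg u M ((k:ℤ) - T) = hN u (M+1) ((k:ℤ) - T) := by
    intro k hk
    simp only [Finset.mem_range] at hk
    rw [hgg, if_pos]
    constructor <;> omega
  rw [Finset.sum_congr rfl h2]
  have hsplit1 : ∑ k ∈ Finset.range (2*T), hN u (M+1) ((k:ℤ) - T)
      = (∑ k ∈ Finset.range T, hN u (M+1) ((k:ℤ) - T))
        + ∑ k ∈ Finset.range T, hN u (M+1) (k:ℤ) := by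
    rw [show 2*T = T + T by ring, Finset.sum_range_add]
    congr 1
    apply Finset.sum_congr rfl
    intro k _
    congr 1
    push_cast
    ring
  have hper : ∀ k : ℕ, hN u (M+1) ((k:ℤ) - T) = hN u (M+1) ((T:ℤ) + k) := by
    intro k
    have := hN_per u M ((k:ℤ) - T)
    rw [show ((k:ℤ) - T + 2^(M+1)) = (T:ℤ) + k by
      rw [show ((2:ℤ)^(M+1)) = 2 * 2^M by ring, hT]; ring] at this
    rw [← this]
  have hsplit2 : ∑ k ∈ Finset.range (2^(M+1)), hN u (M+1) (k:ℤ)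
      = (∑ k ∈ Finset.range T, hN u (M+1) (k:ℤ))
        + ∑ k ∈ Finset.range T, hN u (M+1) ((T:ℤ) + k) := by
    rw [show (2:ℕ)^(M+1) = T + T by rw [hTdef]; ring, Finset.sum_range_add]
    refine congrArg₂ (·+·) rfl (Finset.sum_congr rfl fun k _ => ?_)
    exact congrArg (hN u (M+1)) (by push_cast; ring)
  rw [← claim1 u hu (M+1), hsplit2, hsplit1]
  rw [Finset.sum_congr rfl (fun k _ => hper k)]
  push_cast
  ring

lemma sin_lb {x : ℝ} (hx : |x| ≤ π/2) : 2/π * |x| ≤ |Real.sin x| := by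
  have hπ := Real.pi_pos
  rcases le_or_gt 0 x with h | h
  · rw [abs_of_nonneg h] at hx ⊢
    rw [abs_of_nonneg (Real.sin_nonneg_of_nonneg_of_le_pi h (by linarith))]
    exact Real.mul_le_sin h hx
  · rw [abs_of_neg h] at hx ⊢
    rw [← abs_neg (Real.sin x), ← Real.sin_neg,
      abs_of_nonneg (Real.sin_nonneg_of_nonneg_of_le_pi (by linarith) (by linarith))]
    exact Real.mul_le_sin (by linarith) hx

lemma summable_shift (u : ℝ) : Summable (fun j : ℤ => 1/(u+j)^2) := by
  have h := (Real.summable_one_div_int_add_rpow u 2).mpr (by norm_num)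
  apply h.congr
  intro j
  rw [show ((2:ℝ)) = ((2:ℕ):ℝ) by norm_num, Real.rpow_natCast, sq_abs, add_comm]

lemma keyB {u : ℝ} (h0 : 0 < u) (h1 : u < 1) :
    ∑' j : ℤ, 1/(u+j)^2 = π^2 / Real.sin (π*u)^2 := by
  have hπ := Real.pi_pos
  have hu : ∀ p : ℤ, u ≠ p := by
    intro p hp
    have ha : (0:ℝ) < p := hp ▸ h0
    have hb : (p:ℝ) < 1 := hp ▸ h1
    have h0p : 0 < p := by exact_mod_cast ha
    have h1p : p < 1 := by exact_mod_cast hb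
    omega
  have hne : ∀ j : ℤ, u + (j:ℝ) ≠ 0 := by
    intro j h
    exact hu (-j) (by push_cast; linarith)
  have hDCT : Tendsto (fun M : ℕ => ∑' j : ℤ, gg u M j) atTop
      (𝓝 (∑' j : ℤ, 1/(u+j)^2)) := by
    apply tendsto_tsum_of_dominated_convergence
      (bound := fun j : ℤ => π^2/4 * (1/(u+j)^2))
    · exact (summable_shift u).mul_left _
    · intro j
      -- pointwise convergence
      have hx : Tendsto (fun M : ℕ => π * (u+j) / 2^(M+1)) atTop (𝓝 0) := by
        have hp : Tendsto (fun M : ℕ => ((1:ℝ)/2)^M) atTop (𝓝 0) :=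
          tendsto_pow_atTop_nhds_zero_of_lt_one (by norm_num) (by norm_num)
        have := hp.const_mul (π * (u+j) / 2)
        rw [mul_zero] at this
        apply this.congr
        intro M
        rw [div_pow, one_pow, pow_succ]
        ring
      have hx' : Tendsto (fun M : ℕ => π * (u+j) / 2^(M+1)) atTop (𝓝[≠] 0) := by
        apply tendsto_nhdsWithin_of_tendsto_nhds_of_eventually_within _ hx
        apply Eventually.of_forall
        intro M
        have h2 : ((2:ℝ))^(M+1) ≠ 0 := by positivity
        simp only [Set.mem_compl_iff, Set.mem_singleton_iff]
        exact div_ne_zero (mul_ne_zero (ne_of_gt hπ) (hne j)) h2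
      have hslope : Tendsto (fun y : ℝ => Real.sin y / y) (𝓝[≠] (0:ℝ)) (𝓝 1) := by
        have h := hasDerivAt_iff_tendsto_slope.mp (Real.hasDerivAt_sin 0)
        rw [Real.cos_zero] at h
        apply h.congr'
        filter_upwards [self_mem_nhdsWithin] with y hy
        simp [slope_fun_def_field]
      have hratio := hslope.comp hx'
      have hid : ∀ M : ℕ, hN u (M+1) j
          = 1/((u+j)^2 * (Real.sin (π*(u+j)/2^(M+1)) / (π*(u+j)/2^(M+1)))^2) := by
        intro M
        unfold hN
        have hs := sin_ne u hu (M+1) j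
        have h2 : ((2:ℝ))^(M+1) ≠ 0 := by positivity
        have h22 : ((2:ℝ))^(M+1) * ((2:ℝ))^(M+1) = 4^(M+1) := by
          rw [← mul_pow]; norm_num
        have huj := hne j
        rw [eq_div_iff (by positivity : ((u+(j:ℝ))^2 *
          (Real.sin (π*(u+j)/2^(M+1)) / (π*(u+j)/2^(M+1)))^2) ≠ 0), div_mul_eq_mul_div,
          div_eq_iff (by positivity : ((4:ℝ)^(M+1) * Real.sin (π*(u+j)/2^(M+1))^2) ≠ 0)]
        field_simp
        rw [← h22]
        ring
      have hlim : Tendsto (fun M : ℕ => hN u (M+1) j) atTop (𝓝 (1/(u+j)^2)) := by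
        simp only [hid]
        have h2 : Tendsto (fun M : ℕ => (u+j)^2 *
            (Real.sin (π*(u+j)/2^(M+1)) / (π*(u+j)/2^(M+1)))^2) atTop
            (𝓝 ((u+j)^2 * 1)) := by
          simpa using (hratio.pow 2).const_mul ((u+(j:ℝ))^2)
        have h3 := h2.inv₀ (by simpa using pow_ne_zero 2 (hne j))
        simpa [one_div] using h3
      apply Tendsto.congr' _ hlim
      filter_upwards [eventually_ge_atTop j.natAbs] with M hM
      have habs : |j| ≤ (M:ℤ) := by
        rw [Int.abs_eq_natAbs]; exact_mod_cast hM
      have hMlt : (M:ℤ) < 2^M := by exact_mod_cast Nat.lt_two_pow_self (n := M)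
      obtain ⟨hl, hr⟩ := abs_le.mp habs
      rw [gg, if_pos ⟨by linarith, by linarith⟩]
    · -- bound
      apply Eventually.of_forall
      intro M j
      rw [Real.norm_eq_abs]
      by_cases hc : -(2^M:ℤ) ≤ j ∧ j < 2^M
      · rw [gg, if_pos hc]
        have hpos : (0:ℝ) ≤ hN u (M+1) j := by unfold hN; positivity
        rw [abs_of_nonneg hpos]
        set x := π*(u+(j:ℝ))/2^(M+1) with hxdef
        have h2M : (0:ℝ) < 2^M := by positivity
        have h2M1 : (0:ℝ) < 2^(M+1) := by positivity
        have hj1 : -(2:ℝ)^M ≤ (j:ℝ) := by exact_mod_cast hc.1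
        have hj2 : (j:ℝ) ≤ (2:ℝ)^M - 1 := by
          have h' : (j:ℤ) ≤ 2^M - 1 := by linarith [hc.2]
          have h'' : (j:ℝ) ≤ ((2:ℝ)^M - 1 : ℝ) := by exact_mod_cast h'
          linarith
        have habs : |u + (j:ℝ)| ≤ (2:ℝ)^M := abs_le.mpr ⟨by linarith, by linarith⟩
        have hxabs : |x| ≤ π/2 := by
          rw [hxdef, abs_div, abs_mul, abs_of_pos hπ, abs_of_pos h2M1]
          rw [div_le_iff₀ h2M1, pow_succ]
          calc π * |u + (j:ℝ)| ≤ π * (2:ℝ)^M := by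
                exact mul_le_mul_of_nonneg_left habs (le_of_lt hπ)
            _ = π/2 * ((2:ℝ)^M * 2) := by ring
        have hsin := sin_lb hxabs
        have hsinsq : 4/π^2 * x^2 ≤ Real.sin x ^ 2 := by
          have hnn : 0 ≤ 2/π * |x| := by positivity
          have := mul_self_le_mul_self hnn hsin
          rw [abs_mul_abs_self] at this
          have e : 2/π * |x| * (2/π * |x|) = 4/π^2*x^2 := by
            rw [show x^2 = |x| * |x| by rw [abs_mul_abs_self]; ring]
            ring
          nlinarith [this, e]
        have h22 : ((2:ℝ))^(M+1) * ((2:ℝ))^(M+1) = 4^(M+1) := by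
          rw [← mul_pow]; norm_num
        have key : 4*(u+(j:ℝ))^2 ≤ 4^(M+1) * Real.sin x ^ 2 := by
          have hx2 : x^2 = π^2*(u+(j:ℝ))^2/4^(M+1) := by
            rw [hxdef, div_pow, ← h22]
            ring
          rw [hx2] at hsinsq
          have h4pos : (0:ℝ) < 4^(M+1) := by positivity
          have := mul_le_mul_of_nonneg_left hsinsq (le_of_lt h4pos)
          calc 4*(u+(j:ℝ))^2 = 4^(M+1) * (4/π^2 * (π^2*(u+(j:ℝ))^2/4^(M+1))) := by
                field_simp
            _ ≤ 4^(M+1) * Real.sin x ^ 2 := this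
        unfold hN
        rw [show π^2/4 * (1/(u+(j:ℝ))^2) = π^2 / (4*(u+(j:ℝ))^2) by
          rw [div_mul_div_comm]; ring_nf]
        have hsq : (0:ℝ) < (u+(j:ℝ))^2 := by
          have h := hne j
          positivity
        exact div_le_div_of_nonneg_left (by positivity) (by linarith) key
      · rw [gg, if_neg hc, abs_zero]
        positivity
  have hconst : Tendsto (fun M : ℕ => ∑' j : ℤ, gg u M j) atTop
      (𝓝 (π^2 / Real.sin (π*u)^2)) := by
    simp only [claim2 u hu]
    exact tendsto_const_nhds
  exact tendsto_nhds_unique hDCT hconst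

lemma sin_sq_add_int_mul_pi (y : ℝ) (p : ℤ) :
    Real.sin (y + p*π)^2 = Real.sin y^2 := by
  have h0 : Real.sin ((p:ℝ)*π) = 0 := Real.sin_int_mul_pi p
  have h1 : Real.cos ((p:ℝ)*π)^2 = 1 := by
    have h2 := Real.sin_sq_add_cos_sq ((p:ℝ)*π)
    rw [h0] at h2
    nlinarith [h2]
  rw [Real.sin_add, h0, mul_zero, add_zero, mul_pow, h1, mul_one]

lemma keyB' {u : ℝ} (hu : ∀ p : ℤ, u ≠ p) :
    ∑' j : ℤ, 1/(u+j)^2 = π^2 / Real.sin (π*u)^2 := by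
  have hfr0 : 0 < Int.fract u := by
    rcases lt_or_eq_of_le (Int.fract_nonneg u) with h | h
    · exact h
    · exfalso
      apply hu ⌊u⌋
      have := Int.fract_add_floor u
      rw [← h] at this
      simpa using this.symm
  have hfr1 : Int.fract u < 1 := Int.fract_lt_one u
  have hkey := keyB hfr0 hfr1
  have hsplit : u = Int.fract u + (⌊u⌋ : ℝ) := by rw [Int.fract]; ring
  have hshift : ∑' j : ℤ, 1/(u+j)^2 = ∑' j : ℤ, 1/(Int.fract u + j)^2 := by
    rw [← Equiv.tsum_eq (Equiv.addLeft (⌊u⌋:ℤ)) (fun j : ℤ => 1/(Int.fract u + j)^2)]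
    apply tsum_congr
    intro j
    simp only [Equiv.coe_addLeft]
    congr 1
    have hfr : Int.fract u = u - ⌊u⌋ := by
      have := Int.fract_add_floor u
      linarith
    rw [hfr]
    push_cast
    ring
  have hsin : Real.sin (π*u)^2 = Real.sin (π * Int.fract u)^2 := by
    rw [show π*u = π * Int.fract u + ⌊u⌋ * π by rw [Int.fract]; ring]
    exact sin_sq_add_int_mul_pi _ _
  rw [hshift, hkey, hsin]

lemma tri_nonneg (n : ℕ) (t : ℝ) : 0 ≤ triKernel n t := by
  unfold triKernel
  split
  · positivity
  · positivity

lemma keyA (n : ℕ) (hn : 1 ≤ n) (x : ℝ) :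
    ∑' q : ℤ, ENNReal.ofReal (triKernel n (x - 2*n*q)) = ENNReal.ofReal (1/(2*n)) := by
  have hπ := Real.pi_pos
  have hn0 : ((n:ℝ)) ≠ 0 := by positivity
  have hc : (0:ℝ) < 2*n := by positivity
  set u0 : ℝ := x / (2*n) with hu0
  have hxu : x = 2*n*u0 := by rw [hu0]; field_simp
  by_cases hint : ∃ p : ℤ, u0 = p
  · obtain ⟨p, hp⟩ := hint
    rw [tsum_eq_single p ?_]
    · have : x - 2*n*p = 0 := by rw [hxu, hp]; ring
      rw [this, triKernel, if_pos rfl]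
    · intro j hj
      have hne : x - 2*n*j ≠ 0 := by
        rw [hxu, hp]
        intro h
        apply hj
        have : ((p:ℝ)) = j := by
          have h2 : 2*(n:ℝ)*(p - j) = 0 := by push_cast; linarith
          have := mul_eq_zero.mp h2
          rcases this with h3 | h3
          · exact absurd h3 (by positivity)
          · linarith
        exact_mod_cast this.symm
      rw [triKernel, if_neg hne]
      have hsin : Real.sin (π * (x - 2*n*j) / (2*n)) = 0 := by
        have harg : π * (x - 2*n*j) / (2*n) = ((p - j : ℤ):ℝ) * π := by
          rw [hxu, hp]
          push_cast
          field_simp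
        rw [harg, Real.sin_int_mul_pi]
      rw [hsin]
      norm_num
  · push_neg at hint
    have hsin0 : Real.sin (π*u0) ≠ 0 := by
      intro h
      rw [Real.sin_eq_zero_iff] at h
      obtain ⟨p, hp⟩ := h
      have h2 : π*(u0 - p) = 0 := by linarith [hp]
      rcases mul_eq_zero.mp h2 with h3 | h3
      · exact absurd h3 (ne_of_gt hπ)
      · exact hint p (by linarith)
    set C : ℝ := 2*n*Real.sin (π*u0)^2/(π^2*(2*n)^2) with hC
    have hC0 : 0 ≤ C := by rw [hC]; positivity
    have hterm : ∀ q : ℤ, triKernel n (x - 2*n*q) = C * (1/(u0 - q)^2) := by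
      intro q
      have huq : u0 - q ≠ 0 := by
        intro h
        exact hint q (by linarith)
      have hne : x - 2*n*q ≠ 0 := by
        rw [hxu]
        intro h
        apply huq
        have h2 : 2*(n:ℝ)*(u0 - q) = 0 := by linarith
        rcases mul_eq_zero.mp h2 with h3 | h3
        · exact absurd h3 (by positivity)
        · linarith
      rw [triKernel, if_neg hne]
      have harg : π * (x - 2*n*q) / (2*n) = π*(u0 - q) := by
        rw [hxu]; field_simp
      have hsq : Real.sin (π * (x - 2*n*q) / (2*n))^2 = Real.sin (π*u0)^2 := by
        rw [harg, show π*(u0 - (q:ℝ)) = π*u0 + ((-q : ℤ):ℝ)*π by push_cast; ring]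
        exact sin_sq_add_int_mul_pi (π*u0) (-q)
      rw [hsq, hC]
      rw [show x - 2*n*q = 2*n*(u0 - q) by rw [hxu]; ring]
      field_simp
    simp only [hterm]
    have hnn : ∀ q : ℤ, 0 ≤ 1/(u0 - q)^2 := fun q => by positivity
    have hsum : Summable (fun q : ℤ => 1/(u0 - q)^2) := by
      have := (Equiv.neg ℤ).summable_iff (f := fun j : ℤ => 1/(u0 + j)^2)
      have h2 := this.mpr (summable_shift u0)
      apply h2.congr
      intro j
      simp only [Function.comp, Equiv.neg_apply]
      push_cast
      ring_nf
    have htsum : ∑' q : ℤ, 1/(u0 - q)^2 = π^2 / Real.sin (π*u0)^2 := by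
      rw [← Equiv.tsum_eq (Equiv.neg ℤ) (fun j : ℤ => 1/(u0 - j)^2)]
      rw [show (fun j : ℤ => 1/(u0 - (((Equiv.neg ℤ) j : ℤ)):ℝ)^2) = fun j : ℤ => 1/(u0 + j)^2 by
        funext j
        simp only [Equiv.neg_apply]
        push_cast
        ring_nf]
      exact keyB' hint
    calc ∑' q : ℤ, ENNReal.ofReal (C * (1/(u0 - q)^2))
        = ∑' q : ℤ, ENNReal.ofReal C * ENNReal.ofReal (1/(u0 - q)^2) := by
          apply tsum_congr; intro q; rw [ENNReal.ofReal_mul hC0]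
      _ = ENNReal.ofReal C * ∑' q : ℤ, ENNReal.ofReal (1/(u0 - q)^2) := ENNReal.tsum_mul_left
      _ = ENNReal.ofReal C * ENNReal.ofReal (∑' q : ℤ, 1/(u0 - q)^2) := by
          rw [ENNReal.ofReal_tsum_of_nonneg hnn hsum]
      _ = ENNReal.ofReal (C * (π^2 / Real.sin (π*u0)^2)) := by
          rw [htsum, ← ENNReal.ofReal_mul hC0]
      _ = ENNReal.ofReal (1/(2*n)) := by
          congr 1
          rw [hC]
          field_simp

noncomputable def Dk (n : ℕ) (θ : ℝ) : ℂ :=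
  ∑ k ∈ Finset.Icc (-(n:ℤ)) (n:ℤ), Complex.exp (Complex.I * (k:ℂ) * ((θ:ℝ):ℂ))

lemma Dk_shift (n : ℕ) (θ : ℝ) (q : ℤ) : Dk n (θ - 2*π*q) = Dk n θ := by
  unfold Dk
  apply Finset.sum_congr rfl
  intro k _
  rw [show Complex.I * (k:ℂ) * (((θ - 2*π*q : ℝ)):ℂ)
      = Complex.I*(k:ℂ)*((θ:ℝ):ℂ) + ((-(k*q) : ℤ):ℂ) * (2*(π:ℂ)*Complex.I) by
    push_cast; ring]
  rw [Complex.exp_add, Complex.exp_int_mul_two_pi_mul_I, mul_one]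

end Aux

/-- the periodization of the trapezoidal kernel (triangle times Dirichlet)
collapses to a finite sum of Dirichlet-kernel magnitudes. -/
theorem stmt13 (n : ℕ) (hn : 1 ≤ n) (m : ℝ) (hm : 0 < m)
    (m2 : ℕ) (hm2 : (m2 : ℝ) = 2 * m) (t : ℝ) :
    ENNReal.ofReal (1 / (((n : ℝ) + m) / (n : ℝ))) *
        ∑' l : ℤ, (‖((triKernel n (t - (l : ℝ) / (((n : ℝ) + m) / (n : ℝ))) : ℝ) : ℂ) *
            ∑ k ∈ Finset.Icc (-(n : ℤ)) (n : ℤ),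
              Complex.exp (Complex.I * (k : ℂ) * (Real.pi : ℂ) *
                ((t - (l : ℝ) / (((n : ℝ) + m) / (n : ℝ)) : ℝ) : ℂ) / (n : ℂ))‖₊ : ℝ≥0∞) =
      ENNReal.ofReal ((1 / (2 * ((n : ℝ) + m))) *
        ∑ l ∈ Finset.range (2 * n + m2),
          ‖∑ k ∈ Finset.Icc (-(n : ℤ)) (n : ℤ),
            Complex.exp (Complex.I * (k : ℂ) *
              ((Real.pi * t / (n : ℝ) - (l : ℝ) * Real.pi / ((n : ℝ) + m) : ℝ) : ℂ))‖) := by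
  have hπ := Real.pi_pos
  have hn' : (0:ℝ) < n := by exact_mod_cast hn
  have hn0 : ((n:ℝ)) ≠ 0 := ne_of_gt hn'
  have hnm : (0:ℝ) < (n:ℝ) + m := by positivity
  have hnm0 : ((n:ℝ) + m) ≠ 0 := ne_of_gt hnm
  set L : ℝ := ((n:ℝ) + m) / n with hL
  have hL0 : (0:ℝ) < L := by positivity
  have hL0' : L ≠ 0 := ne_of_gt hL0
  set N : ℕ := 2*n + m2 with hNdef
  have hNr : ((N:ℕ):ℝ) = 2*((n:ℝ)+m) := by rw [hNdef]; push_cast [hm2]; ring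
  have hN0 : N ≠ 0 := by omega
  haveI : NeZero N := ⟨hN0⟩
  -- θ function
  set θf : ℝ → ℝ := fun l => Real.pi * t / n - l * Real.pi / ((n:ℝ)+m) with hθf
  -- summand rewrite
  have hsummand : ∀ l : ℤ,
      (‖((triKernel n (t - (l : ℝ) / L) : ℝ) : ℂ) *
          ∑ k ∈ Finset.Icc (-(n : ℤ)) (n : ℤ),
            Complex.exp (Complex.I * (k : ℂ) * (Real.pi : ℂ) *
              ((t - (l : ℝ) / L : ℝ) : ℂ) / (n : ℂ))‖₊ : ℝ≥0∞)
      = ENNReal.ofReal (triKernel n (t - (l:ℝ)/L)) * ENNReal.ofReal ‖Dk n (θf (l:ℝ))‖ := by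
    intro l
    have hexp : ∑ k ∈ Finset.Icc (-(n : ℤ)) (n : ℤ),
        Complex.exp (Complex.I * (k : ℂ) * (Real.pi : ℂ) *
          ((t - (l : ℝ) / L : ℝ) : ℂ) / (n : ℂ)) = Dk n (θf (l:ℝ)) := by
      unfold Dk
      apply Finset.sum_congr rfl
      intro k _
      congr 1
      show Complex.I * (k:ℂ) * (Real.pi:ℂ) * ((t - (l:ℝ)/L : ℝ):ℂ) / (n:ℂ)
          = Complex.I * (k:ℂ) * ((Real.pi * t / (n:ℝ) - (l:ℝ) * Real.pi / ((n:ℝ)+m) : ℝ):ℂ)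
      have harg : Real.pi * t / (n:ℝ) - (l:ℝ) * Real.pi / ((n:ℝ)+m)
          = Real.pi * (t - (l:ℝ)/L) / n := by
        rw [hL]
        field_simp
      rw [harg]
      push_cast
      field_simp
    rw [hexp, ← enorm_eq_nnnorm, ← ofReal_norm_eq_enorm, norm_mul, Complex.norm_real,
      Real.norm_eq_abs, abs_of_nonneg (tri_nonneg n _), ENNReal.ofReal_mul (tri_nonneg n _)]
  rw [tsum_congr hsummand]
  -- reindex
  set F : ℤ → ENNReal := fun l =>
    ENNReal.ofReal (triKernel n (t - (l:ℝ)/L)) * ENNReal.ofReal ‖Dk n (θf (l:ℝ))‖ with hF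
  rw [show (∑' l : ℤ, F l) = ∑' p : ℤ × Fin N, F ((Int.divModEquiv N).symm p) from
    (Equiv.tsum_eq (Int.divModEquiv N).symm F).symm]
  simp only [Int.divModEquiv_symm_apply]
  rw [ENNReal.tsum_prod', ENNReal.tsum_comm]
  -- inner sums
  have hinner : ∀ r : Fin N, ∑' q : ℤ, F (q * N + (r:ℤ))
      = ENNReal.ofReal ‖Dk n (θf ((r:ℕ):ℝ))‖ * ENNReal.ofReal (1/(2*n)) := by
    intro r
    have hterm : ∀ q : ℤ, F (q * N + (r:ℤ))
        = ENNReal.ofReal (triKernel n ((t - ((r:ℕ):ℝ)/L) - 2*n*q))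
          * ENNReal.ofReal ‖Dk n (θf ((r:ℕ):ℝ))‖ := by
      intro q
      show ENNReal.ofReal (triKernel n (t - (((q * (N:ℤ) + (r:ℤ)):ℤ):ℝ)/L))
          * ENNReal.ofReal ‖Dk n (θf (((q * (N:ℤ) + (r:ℤ)):ℤ):ℝ))‖ = _
      have htri : t - (((q * N + (r:ℤ)):ℤ):ℝ)/L = (t - ((r:ℕ):ℝ)/L) - 2*n*q := by
        have : (((q * N + (r:ℤ)):ℤ):ℝ) = q * (N:ℝ) + ((r:ℕ):ℝ) := by push_cast; ring
        rw [this, hNr, hL]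
        field_simp
        ring
      have hDper : Dk n (θf ((((q * N + (r:ℤ)):ℤ)):ℝ)) = Dk n (θf ((r:ℕ):ℝ)) := by
        have harg : θf ((((q * N + (r:ℤ)):ℤ)):ℝ) = θf ((r:ℕ):ℝ) - 2*π*q := by
          rw [hθf]
          simp only
          have : (((q * N + (r:ℤ)):ℤ):ℝ) = q * (N:ℝ) + ((r:ℕ):ℝ) := by push_cast; ring
          rw [this, hNr]
          field_simp
          ring
        rw [harg, Dk_shift]
      rw [htri, hDper]
    rw [tsum_congr hterm, ENNReal.tsum_mul_right, keyA n hn, mul_comm]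
  rw [tsum_congr hinner]
  -- finite sums
  rw [tsum_fintype]
  rw [Fin.sum_univ_eq_sum_range (fun i =>
    ENNReal.ofReal ‖Dk n (θf (i:ℝ))‖ * ENNReal.ofReal (1/(2*(n:ℝ)))) N]
  -- RHS
  rw [ENNReal.ofReal_mul (by positivity : (0:ℝ) ≤ 1/(2*((n:ℝ)+m)))]
  rw [ENNReal.ofReal_sum_of_nonneg (fun i _ => norm_nonneg _)]
  rw [← Finset.sum_mul]
  rw [show ENNReal.ofReal (1/L) * ((∑ i ∈ Finset.range N,
        ENNReal.ofReal ‖Dk n (θf (i:ℝ))‖) * ENNReal.ofReal (1/(2*(n:ℝ))))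
      = (ENNReal.ofReal (1/L) * ENNReal.ofReal (1/(2*(n:ℝ))))
        * ∑ i ∈ Finset.range N, ENNReal.ofReal ‖Dk n (θf (i:ℝ))‖ by ring]
  rw [← ENNReal.ofReal_mul (by positivity : (0:ℝ) ≤ 1/L)]
  rw [show (1/L) * (1/(2*(n:ℝ))) = 1/(2*((n:ℝ)+m)) by rw [hL]; field_simp]
  rfl
end
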